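/- Let F be a first-order formula, p a unary predicate, x a variable that does not occur free in F, p' a fresh unary predicate, and let F' denote F with p replaced by p'. Then: (a) every Craig interpolant H of F ∧ p(x) and ¬(F' ∧ ¬p'(x)) is a definiens of p within F, i.e., F ⊨ ∀x (p(x) ↔ H) and p does not occur in H; and (b) a definiens of p within F exists if and only if F ∧ p(x) ⊨ ¬(F' ∧ ¬p'(x)). -/

import Mathlib

open Classical

namespace CTIF

/-- First-order terms: variables and applications of function symbols
(a function symbol is a natural number used with an arity). -/
inductive Tm : Type where
  | var : ℕ → Tm
  | app : ℕ → (n : ℕ) → (Fin n → Tm) → Tm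

/-- First-order formulas without equality. -/
inductive Fml : Type where
  | tru : Fml
  | fls : Fml
  | atom : ℕ → (n : ℕ) → (Fin n → Tm) → Fml
  | neg : Fml → Fml
  | conj : Fml → Fml → Fml
  | disj : Fml → Fml → Fml
  | all : ℕ → Fml → Fml
  | exi : ℕ → Fml → Fml

/-- A structure: interpretation of all function and predicate symbols (at every arity). -/
structure Struc (D : Type) : Type where
  fn : ℕ → (n : ℕ) → (Fin n → D) → D
  pr : ℕ → (n : ℕ) → (Fin n → D) → Prop

def Tm.eval {D : Type} (M : Struc D) (a : ℕ → D) : Tm → D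
  | .var x => a x
  | .app f n ts => M.fn f n (fun i => (ts i).eval M a)

def Fml.sat {D : Type} : Fml → Struc D → (ℕ → D) → Prop
  | .tru, _, _ => True
  | .fls, _, _ => False
  | .atom p n ts, M, a => M.pr p n (fun i => (ts i).eval M a)
  | .neg F, M, a => ¬ F.sat M a
  | .conj F G, M, a => F.sat M a ∧ G.sat M a
  | .disj F G, M, a => F.sat M a ∨ G.sat M a
  | .all x F, M, a => ∀ d, F.sat M (Function.update a x d)
  | .exi x F, M, a => ∃ d, F.sat M (Function.update a x d)

/-- Entailment: every model (with any variable assignment) of `F` satisfies `G`. -/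
def entails (F G : Fml) : Prop :=
  ∀ (D : Type), Nonempty D → ∀ (M : Struc D) (a : ℕ → D), F.sat M a → G.sat M a

def Tm.vars : Tm → Set ℕ
  | .var x => {x}
  | .app _ _ ts => ⋃ i, (ts i).vars

/-- Function symbols (with their arity) occurring in a term. -/
def Tm.funs : Tm → Set (ℕ × ℕ)
  | .var _ => ∅
  | .app f n ts => insert (f, n) (⋃ i, (ts i).funs)

def Tm.isGround (t : Tm) : Prop := t.vars = ∅

/-- `t` is a ground term all of whose function symbols come from `S`. -/
def Tm.builtFrom (S : Set (ℕ × ℕ)) : Tm → Prop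
  | .var _ => False
  | .app f n ts => (f, n) ∈ S ∧ ∀ i, Tm.builtFrom S (ts i)

/-- `t` occurs (as a subterm) in the given term. -/
def Tm.occursIn (t : Tm) : Tm → Prop
  | .var x => t = Tm.var x
  | .app f n ts => t = Tm.app f n ts ∨ ∃ i, Tm.occursIn t (ts i)

/-- `s` is a strict subterm of `t`. -/
def Tm.strictSub (s t : Tm) : Prop := s ≠ t ∧ s.occursIn t

def Fml.funs : Fml → Set (ℕ × ℕ)
  | .tru => ∅
  | .fls => ∅
  | .atom _ _ ts => ⋃ i, (ts i).funs
  | .neg F => F.funs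
  | .conj F G => F.funs ∪ G.funs
  | .disj F G => F.funs ∪ G.funs
  | .all _ F => F.funs
  | .exi _ F => F.funs

/-- Predicate symbols with the polarity (`true` = positive) of their occurrences;
the second argument is the polarity of the context. -/
def Fml.preds : Fml → Bool → Set (ℕ × Bool)
  | .tru, _ => ∅
  | .fls, _ => ∅
  | .atom p _ _, pol => {(p, pol)}
  | .neg F, pol => F.preds (!pol)
  | .conj F G, pol => F.preds pol ∪ G.preds pol
  | .disj F G, pol => F.preds pol ∪ G.preds pol
  | .all _ F, pol => F.preds pol
  | .exi _ F, pol => F.preds pol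

/-- pred(F): predicates paired with the polarities of their occurrences in `F`. -/
def Fml.pred (F : Fml) : Set (ℕ × Bool) := F.preds true

/-- Predicate symbols occurring in a formula (disregarding polarity). -/
def Fml.predSyms : Fml → Set ℕ
  | .tru => ∅
  | .fls => ∅
  | .atom p _ _ => {p}
  | .neg F => F.predSyms
  | .conj F G => F.predSyms ∪ G.predSyms
  | .disj F G => F.predSyms ∪ G.predSyms
  | .all _ F => F.predSyms
  | .exi _ F => F.predSyms

def Fml.free : Fml → Set ℕ
  | .tru => ∅
  | .fls => ∅
  | .atom _ _ ts => ⋃ i, (ts i).vars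
  | .neg F => F.free
  | .conj F G => F.free ∪ G.free
  | .disj F G => F.free ∪ G.free
  | .all x F => F.free \ {x}
  | .exi x F => F.free \ {x}

/-- Variables occurring bound (i.e. quantified upon) in a formula. -/
def Fml.bound : Fml → Set ℕ
  | .tru => ∅
  | .fls => ∅
  | .atom _ _ _ => ∅
  | .neg F => F.bound
  | .conj F G => F.bound ∪ G.bound
  | .disj F G => F.bound ∪ G.bound
  | .all x F => insert x F.bound
  | .exi x F => insert x F.bound

def Fml.isQF : Fml → Prop
  | .tru => True
  | .fls => True
  | .atom _ _ _ => True
  | .neg F => F.isQF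
  | .conj F G => F.isQF ∧ G.isQF
  | .disj F G => F.isQF ∧ G.isQF
  | .all _ _ => False
  | .exi _ _ => False

def Fml.isGround (F : Fml) : Prop := F.isQF ∧ F.free = ∅

def Fml.isSentence (F : Fml) : Prop := F.free = ∅

/-- Substitutions: mappings from variables to terms. -/
abbrev Subst := ℕ → Tm

def Subst.dom (σ : Subst) : Set ℕ := {x | σ x ≠ Tm.var x}

def Subst.rng (σ : Subst) : Set Tm := {t | ∃ x ∈ σ.dom, σ x = t}

def Subst.isGround (σ : Subst) : Prop := ∀ x ∈ σ.dom, (σ x).isGround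

/-- Injective substitution: distinct domain variables are mapped to distinct terms. -/
def Subst.inj (σ : Subst) : Prop := ∀ x ∈ σ.dom, ∀ y ∈ σ.dom, σ x = σ y → x = y

def Tm.subst (σ : Subst) : Tm → Tm
  | .var x => σ x
  | .app f n ts => .app f n (fun i => (ts i).subst σ)

/-- Substitution application to formulas (free occurrences of variables are replaced). -/
def Fml.subst (σ : Subst) : Fml → Fml
  | .tru => .tru
  | .fls => .fls
  | .atom p n ts => .atom p n (fun i => (ts i).subst σ)
  | .neg F => .neg (F.subst σ)
  | .conj F G => .conj (F.subst σ) (G.subst σ)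
  | .disj F G => .disj (F.subst σ) (G.subst σ)
  | .all x F => .all x (F.subst (Function.update σ x (Tm.var x)))
  | .exi x F => .exi x (F.subst (Function.update σ x (Tm.var x)))

/-- Inverse application of an injective substitution to a term:
all rng(σ)-maximal occurrences of terms in the range of σ are replaced by
the corresponding domain variable. -/
noncomputable def Tm.inv (σ : Subst) : Tm → Tm
  | .var x =>
      if h : ∃ v ∈ Subst.dom σ, σ v = Tm.var x then Tm.var h.choose else Tm.var x
  | .app f n ts =>
      if h : ∃ v ∈ Subst.dom σ, σ v = Tm.app f n ts then Tm.var h.choose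
      else .app f n (fun i => Tm.inv σ (ts i))

/-- Inverse application of an injective substitution to a formula. -/
noncomputable def Fml.inv (σ : Subst) : Fml → Fml
  | .tru => .tru
  | .fls => .fls
  | .atom p n ts => .atom p n (fun i => Tm.inv σ (ts i))
  | .neg F => .neg (F.inv σ)
  | .conj F G => .conj (F.inv σ) (G.inv σ)
  | .disj F G => .disj (F.inv σ) (G.inv σ)
  | .all x F => .all x (F.inv σ)
  | .exi x F => .exi x (F.inv σ)

/-- `H` is a Craig-Lyndon interpolant of `F` and `G`. -/
def CLInterp (F G H : Fml) : Prop :=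
  entails F H ∧ entails H G ∧
  H.pred ⊆ F.pred ∩ G.pred ∧
  H.funs ⊆ F.funs ∩ G.funs ∧
  H.free ⊆ F.free ∩ G.free

/-- `H` is a Craig interpolant of `F` and `G` (no polarity constraint). -/
def CraigInterp (F G H : Fml) : Prop :=
  entails F H ∧ entails H G ∧
  H.predSyms ⊆ F.predSyms ∩ G.predSyms ∧
  H.funs ⊆ F.funs ∩ G.funs ∧
  H.free ⊆ F.free ∩ G.free

/-- An S-term: a term whose outermost function symbol is in `S`. -/
def isSTerm (S : Set (ℕ × ℕ)) : Tm → Prop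
  | .var _ => False
  | .app f n _ => (f, n) ∈ S

def STerms (S : Set (ℕ × ℕ)) : Set Tm := {t | isSTerm S t}

/-- `t` has a `T`-maximal occurrence in the given term: an occurrence that is
not within an occurrence of another member of `T`. -/
def Tm.hasMaxOcc (T : Set Tm) (t : Tm) : Tm → Prop
  | .var x => Tm.var x ∈ T ∧ t = Tm.var x
  | .app f n ts =>
      (Tm.app f n ts ∈ T ∧ t = Tm.app f n ts) ∨
      (Tm.app f n ts ∉ T ∧ ∃ i, Tm.hasMaxOcc T t (ts i))

/-- `t` has a `T`-maximal occurrence in the formula. -/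
def Fml.hasMaxOcc (T : Set Tm) (t : Tm) : Fml → Prop
  | .tru => False
  | .fls => False
  | .atom _ _ ts => ∃ i, Tm.hasMaxOcc T t (ts i)
  | .neg F => F.hasMaxOcc T t
  | .conj F G => F.hasMaxOcc T t ∨ G.hasMaxOcc T t
  | .disj F G => F.hasMaxOcc T t ∨ G.hasMaxOcc T t
  | .all _ F => F.hasMaxOcc T t
  | .exi _ F => F.hasMaxOcc T t

/-- Universal quantification over a list of variables. -/
def alls (xs : List ℕ) (F : Fml) : Fml := xs.foldr Fml.all F

end CTIF
namespace CTIF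

/-- Renaming of a predicate symbol: every occurrence of `p` becomes `q`. -/
def Fml.renamePred (p q : ℕ) : Fml → Fml
  | .tru => .tru
  | .fls => .fls
  | .atom r n ts => .atom (if r = p then q else r) n ts
  | .neg F => .neg (F.renamePred p q)
  | .conj F G => .conj (F.renamePred p q) (G.renamePred p q)
  | .disj F G => .disj (F.renamePred p q) (G.renamePred p q)
  | .all x F => .all x (F.renamePred p q)
  | .exi x F => .exi x (F.renamePred p q)

/-- A ↔ B, expressed with the available connectives. -/
def iffFml (A B : Fml) : Fml := .conj (.disj (.neg A) B) (.disj (.neg B) A)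

/-- The atom p(x). -/
def atom1 (p x : ℕ) : Fml := .atom p 1 (fun _ => Tm.var x)

/-- `H` is a definiens of the unary predicate `p` within `F` (relative to the
variable `x`): F ⊨ ∀x (p(x) ↔ H) and `p` does not occur in `H`. -/
def isDefiniens (F : Fml) (p x : ℕ) (H : Fml) : Prop :=
  entails F (.all x (iffFml (atom1 p x) H)) ∧ p ∉ H.predSyms

/-! ### Basic semantic lemmas -/

theorem Tm.eval_congr {D : Type} {M M' : Struc D} {a b : ℕ → D}
    (hfn : ∀ f n, (f, n) ∈ Tm.funs t → M.fn f n = M'.fn f n)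
    (hv : ∀ v ∈ Tm.vars t, a v = b v) :
    t.eval M a = t.eval M' b := by
  induction t with
  | var x => exact hv x (by simp [Tm.vars])
  | app f n ts ih =>
    simp only [Tm.eval]
    rw [hfn f n (by simp [Tm.funs])]
    congr 1
    funext i
    exact ih i (fun g m hg => hfn g m (by simp [Tm.funs]; right; exact ⟨i, hg⟩))
      (fun v hv' => hv v (by simp [Tm.vars]; exact ⟨i, hv'⟩))

theorem Tm.eval_ground {D : Type} {M : Struc D} {a b : ℕ → D} {t : Tm}
    (h : t.vars = ∅) : t.eval M a = t.eval M b :=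
  Tm.eval_congr (fun _ _ _ => rfl) (fun v hv => by rw [h] at hv; exact absurd hv (by simp))

theorem Fml.sat_congr {D : Type} {M M' : Struc D} :
    ∀ (F : Fml) (a b : ℕ → D),
    (∀ f n, (f, n) ∈ F.funs → M.fn f n = M'.fn f n) →
    (∀ r ∈ F.predSyms, ∀ n, M.pr r n = M'.pr r n) →
    (∀ v ∈ F.free, a v = b v) →
    (F.sat M a ↔ F.sat M' b) := by
  intro F
  induction F with
  | tru => simp [Fml.sat]
  | fls => simp [Fml.sat]
  | atom p n ts =>
    intro a b hfn hpr hv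
    simp only [Fml.sat]
    rw [hpr p (by simp [Fml.predSyms]) n]
    have : (fun i => (ts i).eval M a) = fun i => (ts i).eval M' b := by
      funext i
      exact Tm.eval_congr (fun g m hg => hfn g m (by simp [Fml.funs]; exact ⟨i, hg⟩))
        (fun v hv' => hv v (by simp [Fml.free]; exact ⟨i, hv'⟩))
    rw [this]
  | neg F ih =>
    intro a b hfn hpr hv
    simp only [Fml.sat]
    rw [ih a b hfn (fun r hr => hpr r (by exact hr)) hv]
  | conj F G ihF ihG =>
    intro a b hfn hpr hv
    simp only [Fml.sat]
    rw [ihF a b (fun f n h => hfn f n (Or.inl h)) (fun r hr => hpr r (Or.inl hr))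
      (fun v hv' => hv v (Or.inl hv')),
      ihG a b (fun f n h => hfn f n (Or.inr h)) (fun r hr => hpr r (Or.inr hr))
      (fun v hv' => hv v (Or.inr hv'))]
  | disj F G ihF ihG =>
    intro a b hfn hpr hv
    simp only [Fml.sat]
    rw [ihF a b (fun f n h => hfn f n (Or.inl h)) (fun r hr => hpr r (Or.inl hr))
      (fun v hv' => hv v (Or.inl hv')),
      ihG a b (fun f n h => hfn f n (Or.inr h)) (fun r hr => hpr r (Or.inr hr))
      (fun v hv' => hv v (Or.inr hv'))]
  | all x F ih =>
    intro a b hfn hpr hv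
    simp only [Fml.sat]
    refine forall_congr' (fun d => ih _ _ hfn hpr ?_)
    intro v hv'
    rcases eq_or_ne v x with rfl | hne
    · simp
    · simp only [Function.update_of_ne hne]
      exact hv v ⟨hv', hne⟩
  | exi x F ih =>
    intro a b hfn hpr hv
    simp only [Fml.sat]
    refine exists_congr (fun d => ih _ _ hfn hpr ?_)
    intro v hv'
    rcases eq_or_ne v x with rfl | hne
    · simp
    · simp only [Function.update_of_ne hne]
      exact hv v ⟨hv', hne⟩

theorem Fml.sat_sentence {D : Type} {M : Struc D} {F : Fml} (h : F.free = ∅)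
    (a b : ℕ → D) : F.sat M a ↔ F.sat M b :=
  Fml.sat_congr F a b (fun _ _ _ => rfl) (fun _ _ _ => rfl)
    (fun v hv => by rw [h] at hv; exact absurd hv (by simp))

/-- Structure with predicate `p` reinterpreted as `q`'s interpretation. -/
def prSwap {D : Type} (M : Struc D) (p q : ℕ) : Struc D :=
  ⟨M.fn, fun r n => if r = p then M.pr q n else M.pr r n⟩

theorem sat_renamePred {D : Type} {M : Struc D} (p q : ℕ) :
    ∀ (F : Fml) (a : ℕ → D), (F.renamePred p q).sat M a ↔ F.sat (prSwap M p q) a := by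
  intro F
  induction F with
  | tru => simp [Fml.sat, Fml.renamePred]
  | fls => simp [Fml.sat, Fml.renamePred]
  | atom r n ts =>
    intro a
    have he : (fun i => Tm.eval (prSwap M p q) a (ts i)) = fun i => Tm.eval M a (ts i) :=
      funext fun i => Tm.eval_congr (fun _ _ _ => rfl) (fun _ _ => rfl)
    simp only [Fml.renamePred, Fml.sat, he]
    by_cases h : r = p <;> simp [prSwap, h]
  | neg F ih => intro a; simp [Fml.sat, Fml.renamePred, ih]
  | conj F G ihF ihG => intro a; simp [Fml.sat, Fml.renamePred, ihF, ihG]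
  | disj F G ihF ihG => intro a; simp [Fml.sat, Fml.renamePred, ihF, ihG]
  | all x F ih => intro a; simp [Fml.sat, Fml.renamePred, ih]
  | exi x F ih => intro a; simp [Fml.sat, Fml.renamePred, ih]

theorem predSyms_renamePred (p q : ℕ) :
    ∀ F : Fml, (F.renamePred p q).predSyms ⊆ insert q (F.predSyms \ {p}) := by
  intro F
  induction F with
  | tru => simp [Fml.renamePred, Fml.predSyms]
  | fls => simp [Fml.renamePred, Fml.predSyms]
  | atom r n ts =>
    intro s hs
    simp only [Fml.renamePred, Fml.predSyms, Set.mem_singleton_iff] at hs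
    subst hs
    by_cases h : r = p <;> simp [Fml.predSyms, h]
  | neg F ih => exact ih
  | conj F G ihF ihG =>
    intro r hr
    rcases hr with h | h
    · have := ihF h
      simp only [Set.mem_insert_iff, Set.mem_diff, Set.mem_singleton_iff] at this ⊢
      rcases this with h' | h'
      · exact Or.inl h'
      · exact Or.inr ⟨Or.inl h'.1, h'.2⟩
    · have := ihG h
      simp only [Set.mem_insert_iff, Set.mem_diff, Set.mem_singleton_iff] at this ⊢
      rcases this with h' | h'
      · exact Or.inl h'
      · exact Or.inr ⟨Or.inr h'.1, h'.2⟩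
  | disj F G ihF ihG =>
    intro r hr
    rcases hr with h | h
    · have := ihF h
      simp only [Set.mem_insert_iff, Set.mem_diff, Set.mem_singleton_iff] at this ⊢
      rcases this with h' | h'
      · exact Or.inl h'
      · exact Or.inr ⟨Or.inl h'.1, h'.2⟩
    · have := ihG h
      simp only [Set.mem_insert_iff, Set.mem_diff, Set.mem_singleton_iff] at this ⊢
      rcases this with h' | h'
      · exact Or.inl h'
      · exact Or.inr ⟨Or.inr h'.1, h'.2⟩
  | all x F ih => exact ih
  | exi x F ih => exact ih

/-! ### Substitution lemmas -/

/-- Ground-or-identity substitutions. -/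
def GI (σ : Subst) : Prop := ∀ v, σ v = Tm.var v ∨ (σ v).vars = ∅

theorem GI.update {σ : Subst} (h : GI σ) (x : ℕ) : GI (Function.update σ x (Tm.var x)) := by
  intro v
  rcases eq_or_ne v x with rfl | hne
  · simp
  · simp only [Function.update_of_ne hne]; exact h v

theorem Tm.eval_subst {D : Type} {M : Struc D} {a : ℕ → D} (σ : Subst) :
    ∀ t : Tm, (t.subst σ).eval M a = t.eval M (fun v => (σ v).eval M a) := by
  intro t
  induction t with
  | var x => simp [Tm.subst, Tm.eval]
  | app f n ts ih => simp only [Tm.subst, Tm.eval]; congr 1; funext i; exact ih i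

theorem Fml.sat_subst {D : Type} {M : Struc D} :
    ∀ (F : Fml) (σ : Subst) (a : ℕ → D), GI σ →
    ((F.subst σ).sat M a ↔ F.sat M (fun v => (σ v).eval M a)) := by
  intro F
  induction F with
  | tru => simp [Fml.subst, Fml.sat]
  | fls => simp [Fml.subst, Fml.sat]
  | atom p n ts =>
    intro σ a _
    simp only [Fml.subst, Fml.sat]
    have : (fun i => ((ts i).subst σ).eval M a) = fun i => (ts i).eval M (fun v => (σ v).eval M a) :=
      funext fun i => Tm.eval_subst σ (ts i)
    rw [this]
  | neg F ih => intro σ a hσ; simp only [Fml.subst, Fml.sat]; rw [ih σ a hσ]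
  | conj F G ihF ihG => intro σ a hσ; simp only [Fml.subst, Fml.sat]; rw [ihF σ a hσ, ihG σ a hσ]
  | disj F G ihF ihG => intro σ a hσ; simp only [Fml.subst, Fml.sat]; rw [ihF σ a hσ, ihG σ a hσ]
  | all x F ih =>
    intro σ a hσ
    simp only [Fml.subst, Fml.sat]
    refine forall_congr' (fun d => ?_)
    rw [ih _ _ (hσ.update x)]
    have : (fun v => ((Function.update σ x (Tm.var x)) v).eval M (Function.update a x d))
        = Function.update (fun v => (σ v).eval M a) x d := by
      funext v
      rcases eq_or_ne v x with rfl | hne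
      · simp [Tm.eval]
      · simp only [Function.update_of_ne hne]
        rcases hσ v with h | h
        · rw [h]; simp [Tm.eval, Function.update_of_ne hne]
        · exact Tm.eval_ground h
    rw [this]
  | exi x F ih =>
    intro σ a hσ
    simp only [Fml.subst, Fml.sat]
    refine exists_congr (fun d => ?_)
    rw [ih _ _ (hσ.update x)]
    have : (fun v => ((Function.update σ x (Tm.var x)) v).eval M (Function.update a x d))
        = Function.update (fun v => (σ v).eval M a) x d := by
      funext v
      rcases eq_or_ne v x with rfl | hne
      · simp [Tm.eval]
      · simp only [Function.update_of_ne hne]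
        rcases hσ v with h | h
        · rw [h]; simp [Tm.eval, Function.update_of_ne hne]
        · exact Tm.eval_ground h
    rw [this]

theorem Fml.predSyms_subst : ∀ (F : Fml) (σ : Subst), (F.subst σ).predSyms = F.predSyms := by
  intro F
  induction F with
  | tru => intro σ; rfl
  | fls => intro σ; rfl
  | atom p n ts => intro σ; rfl
  | neg F ih => intro σ; simp [Fml.subst, Fml.predSyms, ih]
  | conj F G ihF ihG => intro σ; simp [Fml.subst, Fml.predSyms, ihF, ihG]
  | disj F G ihF ihG => intro σ; simp [Fml.subst, Fml.predSyms, ihF, ihG]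
  | all x F ih => intro σ; simp [Fml.subst, Fml.predSyms, ih]
  | exi x F ih => intro σ; simp [Fml.subst, Fml.predSyms, ih]

theorem Tm.vars_subst (σ : Subst) :
    ∀ t : Tm, (t.subst σ).vars ⊆ ⋃ v ∈ t.vars, (σ v).vars := by
  intro t
  induction t with
  | var x => simp [Tm.subst, Tm.vars]
  | app f n ts ih =>
    simp only [Tm.subst, Tm.vars]
    intro u hu
    simp only [Set.mem_iUnion] at hu ⊢
    obtain ⟨i, hi⟩ := hu
    obtain ⟨v, hv, hv2⟩ := by simpa only [Set.mem_iUnion] using ih i hi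
    exact ⟨v, ⟨i, hv⟩, hv2⟩

theorem Tm.funs_subst (σ : Subst) :
    ∀ t : Tm, (t.subst σ).funs ⊆ t.funs ∪ ⋃ v ∈ t.vars, (σ v).funs := by
  intro t
  induction t with
  | var x => simp [Tm.subst, Tm.funs, Tm.vars]
  | app f n ts ih =>
    simp only [Tm.subst, Tm.funs]
    intro u hu
    rcases hu with rfl | hu
    · exact Or.inl (Set.mem_insert _ _)
    · simp only [Set.mem_iUnion] at hu
      obtain ⟨i, hi⟩ := hu
      rcases ih i hi with h | h
      · exact Or.inl (Set.mem_insert_iff.2 (Or.inr (Set.mem_iUnion.2 ⟨i, h⟩)))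
      · simp only [Set.mem_iUnion] at h
        obtain ⟨v, hv, hv2⟩ := h
        refine Or.inr (Set.mem_iUnion.2 ⟨v, Set.mem_iUnion.2 ⟨?_, hv2⟩⟩)
        show v ∈ Tm.vars (.app f n ts)
        simp only [Tm.vars, Set.mem_iUnion]
        exact ⟨i, hv⟩

theorem Fml.free_subst : ∀ (F : Fml) (σ : Subst),
    (F.subst σ).free ⊆ ⋃ v ∈ F.free, (σ v).vars := by
  intro F
  induction F with
  | tru => intro σ; simp [Fml.subst, Fml.free]
  | fls => intro σ; simp [Fml.subst, Fml.free]
  | atom p n ts =>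
    intro σ u hu
    simp only [Fml.subst, Fml.free, Set.mem_iUnion] at hu ⊢
    obtain ⟨i, hi⟩ := hu
    obtain ⟨v, hv, hv2⟩ := by simpa only [Set.mem_iUnion] using Tm.vars_subst σ (ts i) hi
    exact ⟨v, ⟨i, hv⟩, hv2⟩
  | neg F ih => exact ih
  | conj F G ihF ihG =>
    intro σ u hu
    simp only [Fml.subst, Fml.free] at hu
    rcases hu with h | h
    · obtain ⟨v, hv, hv2⟩ := by simpa only [Set.mem_iUnion] using ihF σ h
      simp only [Set.mem_iUnion]
      exact ⟨v, Or.inl hv, hv2⟩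
    · obtain ⟨v, hv, hv2⟩ := by simpa only [Set.mem_iUnion] using ihG σ h
      simp only [Set.mem_iUnion]
      exact ⟨v, Or.inr hv, hv2⟩
  | disj F G ihF ihG =>
    intro σ u hu
    simp only [Fml.subst, Fml.free] at hu
    rcases hu with h | h
    · obtain ⟨v, hv, hv2⟩ := by simpa only [Set.mem_iUnion] using ihF σ h
      simp only [Set.mem_iUnion]
      exact ⟨v, Or.inl hv, hv2⟩
    · obtain ⟨v, hv, hv2⟩ := by simpa only [Set.mem_iUnion] using ihG σ h
      simp only [Set.mem_iUnion]
      exact ⟨v, Or.inr hv, hv2⟩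
  | all x F ih =>
    intro σ u hu
    simp only [Fml.subst, Fml.free, Set.mem_diff, Set.mem_singleton_iff] at hu
    obtain ⟨hu1, hu2⟩ := hu
    obtain ⟨v, hv, hv2⟩ := by simpa only [Set.mem_iUnion] using ih _ hu1
    rcases eq_or_ne v x with rfl | hne
    · simp only [Function.update_self, Tm.vars, Set.mem_singleton_iff] at hv2
      exact absurd hv2 hu2
    · rw [Function.update_of_ne hne] at hv2
      simp only [Set.mem_iUnion]
      exact ⟨v, ⟨hv, hne⟩, hv2⟩
  | exi x F ih =>
    intro σ u hu
    simp only [Fml.subst, Fml.free, Set.mem_diff, Set.mem_singleton_iff] at hu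
    obtain ⟨hu1, hu2⟩ := hu
    obtain ⟨v, hv, hv2⟩ := by simpa only [Set.mem_iUnion] using ih _ hu1
    rcases eq_or_ne v x with rfl | hne
    · simp only [Function.update_self, Tm.vars, Set.mem_singleton_iff] at hv2
      exact absurd hv2 hu2
    · rw [Function.update_of_ne hne] at hv2
      simp only [Set.mem_iUnion]
      exact ⟨v, ⟨hv, hne⟩, hv2⟩

theorem Fml.funs_subst : ∀ (F : Fml) (σ : Subst),
    (F.subst σ).funs ⊆ F.funs ∪ ⋃ v ∈ F.free, (σ v).funs := by
  intro F
  induction F with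
  | tru => intro σ; simp [Fml.subst, Fml.funs]
  | fls => intro σ; simp [Fml.subst, Fml.funs]
  | atom p n ts =>
    intro σ u hu
    simp only [Fml.subst, Fml.funs, Set.mem_iUnion] at hu
    obtain ⟨i, hi⟩ := hu
    rcases Tm.funs_subst σ (ts i) hi with h | h
    · exact Or.inl (by simp only [Fml.funs, Set.mem_iUnion]; exact ⟨i, h⟩)
    · obtain ⟨v, hv, hv2⟩ := by simpa only [Set.mem_iUnion] using h
      refine Or.inr (Set.mem_iUnion.2 ⟨v, Set.mem_iUnion.2 ⟨?_, hv2⟩⟩)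
      simp only [Fml.free, Set.mem_iUnion]
      exact ⟨i, hv⟩
  | neg F ih => exact ih
  | conj F G ihF ihG =>
    intro σ u hu
    simp only [Fml.subst, Fml.funs] at hu
    rcases hu with h | h
    · rcases ihF σ h with h' | h'
      · exact Or.inl (Or.inl h')
      · obtain ⟨v, hv, hv2⟩ := by simpa only [Set.mem_iUnion] using h'
        exact Or.inr (Set.mem_iUnion.2 ⟨v, Set.mem_iUnion.2 ⟨Or.inl hv, hv2⟩⟩)
    · rcases ihG σ h with h' | h'
      · exact Or.inl (Or.inr h')
      · obtain ⟨v, hv, hv2⟩ := by simpa only [Set.mem_iUnion] using h'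
        exact Or.inr (Set.mem_iUnion.2 ⟨v, Set.mem_iUnion.2 ⟨Or.inr hv, hv2⟩⟩)
  | disj F G ihF ihG =>
    intro σ u hu
    simp only [Fml.subst, Fml.funs] at hu
    rcases hu with h | h
    · rcases ihF σ h with h' | h'
      · exact Or.inl (Or.inl h')
      · obtain ⟨v, hv, hv2⟩ := by simpa only [Set.mem_iUnion] using h'
        exact Or.inr (Set.mem_iUnion.2 ⟨v, Set.mem_iUnion.2 ⟨Or.inl hv, hv2⟩⟩)
    · rcases ihG σ h with h' | h'
      · exact Or.inl (Or.inr h')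
      · obtain ⟨v, hv, hv2⟩ := by simpa only [Set.mem_iUnion] using h'
        exact Or.inr (Set.mem_iUnion.2 ⟨v, Set.mem_iUnion.2 ⟨Or.inr hv, hv2⟩⟩)
  | all x F ih =>
    intro σ u hu
    rcases ih _ hu with h | h
    · exact Or.inl h
    · obtain ⟨v, hv, hv2⟩ := by simpa only [Set.mem_iUnion] using h
      rcases eq_or_ne v x with rfl | hne
      · simp only [Function.update_self, Tm.funs] at hv2
        exact absurd hv2 (by simp)
      · rw [Function.update_of_ne hne] at hv2
        refine Or.inr (Set.mem_iUnion.2 ⟨v, Set.mem_iUnion.2 ⟨⟨hv, hne⟩, hv2⟩⟩)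
  | exi x F ih =>
    intro σ u hu
    rcases ih _ hu with h | h
    · exact Or.inl h
    · obtain ⟨v, hv, hv2⟩ := by simpa only [Set.mem_iUnion] using h
      rcases eq_or_ne v x with rfl | hne
      · simp only [Function.update_self, Tm.funs] at hv2
        exact absurd hv2 (by simp)
      · rw [Function.update_of_ne hne] at hv2
        refine Or.inr (Set.mem_iUnion.2 ⟨v, Set.mem_iUnion.2 ⟨⟨hv, hne⟩, hv2⟩⟩)

/-- Size of a formula (number of connectives/quantifiers). -/
def Fml.size : Fml → ℕ
  | .tru => 0
  | .fls => 0
  | .atom _ _ _ => 0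
  | .neg F => F.size + 1
  | .conj F G => F.size + G.size + 1
  | .disj F G => F.size + G.size + 1
  | .all _ F => F.size + 1
  | .exi _ F => F.size + 1

theorem Fml.size_subst : ∀ (F : Fml) (σ : Subst), (F.subst σ).size = F.size := by
  intro F
  induction F with
  | tru => intro σ; rfl
  | fls => intro σ; rfl
  | atom p n ts => intro σ; rfl
  | neg F ih => intro σ; simp [Fml.subst, Fml.size, ih]
  | conj F G ihF ihG => intro σ; simp [Fml.subst, Fml.size, ihF, ihG]
  | disj F G ihF ihG => intro σ; simp [Fml.subst, Fml.size, ihF, ihG]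
  | all x F ih => intro σ; simp [Fml.subst, Fml.size, ih]
  | exi x F ih => intro σ; simp [Fml.subst, Fml.size, ih]

/-! ### Finiteness -/

theorem Tm.finite_vars : ∀ t : Tm, t.vars.Finite := by
  intro t
  induction t with
  | var x => simp [Tm.vars]
  | app f n ts ih => exact Set.finite_iUnion ih

theorem Tm.finite_funs : ∀ t : Tm, t.funs.Finite := by
  intro t
  induction t with
  | var x => simp [Tm.funs]
  | app f n ts ih => exact Set.Finite.insert _ (Set.finite_iUnion ih)

theorem Fml.finite_funs : ∀ F : Fml, F.funs.Finite := by
  intro F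
  induction F with
  | tru => simp [Fml.funs]
  | fls => simp [Fml.funs]
  | atom p n ts => exact Set.finite_iUnion (fun i => Tm.finite_funs (ts i))
  | neg F ih => exact ih
  | conj F G ihF ihG => exact ihF.union ihG
  | disj F G ihF ihG => exact ihF.union ihG
  | all x F ih => exact ih
  | exi x F ih => exact ih

theorem Fml.finite_free : ∀ F : Fml, F.free.Finite := by
  intro F
  induction F with
  | tru => simp [Fml.free]
  | fls => simp [Fml.free]
  | atom p n ts => exact Set.finite_iUnion (fun i => Tm.finite_vars (ts i))
  | neg F ih => exact ih
  | conj F G ihF ihG => exact ihF.union ihG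
  | disj F G ihF ihG => exact ihF.union ihG
  | all x F ih => exact ih.diff
  | exi x F ih => exact ih.diff

theorem Fml.finite_bound : ∀ F : Fml, F.bound.Finite := by
  intro F
  induction F with
  | tru => simp [Fml.bound]
  | fls => simp [Fml.bound]
  | atom p n ts => simp [Fml.bound]
  | neg F ih => exact ih
  | conj F G ihF ihG => exact ihF.union ihG
  | disj F G ihF ihG => exact ihF.union ihG
  | all x F ih => exact ih.insert _
  | exi x F ih => exact ih.insert _

/-! ### Replacing constants by variables -/

/-- Replace every constant (0-ary function symbol) `f` with `s f` by the variable `w f`. -/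
noncomputable def Tm.repc (s : ℕ → Prop) (w : ℕ → ℕ) : Tm → Tm
  | .var y => .var y
  | .app f n ts => if n = 0 ∧ s f then .var (w f) else .app f n (fun i => (ts i).repc s w)

noncomputable def Fml.repc (s : ℕ → Prop) (w : ℕ → ℕ) : Fml → Fml
  | .tru => .tru
  | .fls => .fls
  | .atom p n ts => .atom p n (fun i => (ts i).repc s w)
  | .neg F => .neg (F.repc s w)
  | .conj F G => .conj (F.repc s w) (G.repc s w)
  | .disj F G => .disj (F.repc s w) (G.repc s w)
  | .all x F => .all x (F.repc s w)
  | .exi x F => .exi x (F.repc s w)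

/-- `M` with the constants selected by `s` reinterpreted via `g`. -/
noncomputable def McD {D : Type} (M : Struc D) (s : ℕ → Prop) (g : ℕ → D) : Struc D :=
  ⟨fun f n ds => if n = 0 ∧ s f then g f else M.fn f n ds, M.pr⟩

theorem Tm.eval_repc {D : Type} {M : Struc D} {a : ℕ → D} (s : ℕ → Prop) (w : ℕ → ℕ) :
    ∀ t : Tm, (t.repc s w).eval M a = t.eval (McD M s (fun f => a (w f))) a := by
  intro t
  induction t with
  | var y => simp [Tm.repc, Tm.eval]
  | app f n ts ih =>
    by_cases h : n = 0 ∧ s f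
    · simp only [Tm.repc, if_pos h, Tm.eval, McD, if_pos h]
    · simp only [Tm.repc, if_neg h, Tm.eval, McD, if_neg h]
      congr 1
      funext i
      exact ih i

theorem Fml.sat_repc {D : Type} {M : Struc D} :
    ∀ (F : Fml) (a : ℕ → D),
    (∀ f, s f → (f, 0) ∈ F.funs → w f ∉ F.bound) →
    ((F.repc s w).sat M a ↔ F.sat (McD M s (fun f => a (w f))) a) := by
  intro F
  induction F with
  | tru => simp [Fml.repc, Fml.sat]
  | fls => simp [Fml.repc, Fml.sat]
  | atom p n ts =>
    intro a _
    simp only [Fml.repc, Fml.sat, McD]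
    have : (fun i => ((ts i).repc s w).eval M a)
        = fun i => (ts i).eval (McD M s (fun f => a (w f))) a :=
      funext fun i => Tm.eval_repc s w (ts i)
    rw [this]
    rfl
  | neg F ih => intro a hb; simp only [Fml.repc, Fml.sat]; rw [ih a hb]
  | conj F G ihF ihG =>
    intro a hb
    simp only [Fml.repc, Fml.sat]
    rw [ihF a (fun f hf h => hb f hf (Or.inl h) ∘ Or.inl),
      ihG a (fun f hf h => hb f hf (Or.inr h) ∘ Or.inr)]
  | disj F G ihF ihG =>
    intro a hb
    simp only [Fml.repc, Fml.sat]
    rw [ihF a (fun f hf h => hb f hf (Or.inl h) ∘ Or.inl),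
      ihG a (fun f hf h => hb f hf (Or.inr h) ∘ Or.inr)]
  | all x F ih =>
    intro a hb
    simp only [Fml.repc, Fml.sat]
    refine forall_congr' (fun d => ?_)
    rw [ih _ (fun f hf h hmem => hb f hf h (Set.mem_insert_iff.2 (Or.inr hmem)))]
    refine Fml.sat_congr F _ _ (fun f n hfn => ?_) (fun _ _ _ => rfl) (fun _ _ => rfl)
    simp only [McD]
    by_cases h : n = 0 ∧ s f
    · simp only [if_pos h]
      funext ds
      have hwx : w f ≠ x := by
        intro he
        exact hb f h.2 (h.1 ▸ hfn) (he ▸ Set.mem_insert _ _)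
      rw [Function.update_of_ne hwx]
    · simp only [if_neg h]
  | exi x F ih =>
    intro a hb
    simp only [Fml.repc, Fml.sat]
    refine exists_congr (fun d => ?_)
    rw [ih _ (fun f hf h hmem => hb f hf h (Set.mem_insert_iff.2 (Or.inr hmem)))]
    refine Fml.sat_congr F _ _ (fun f n hfn => ?_) (fun _ _ _ => rfl) (fun _ _ => rfl)
    simp only [McD]
    by_cases h : n = 0 ∧ s f
    · simp only [if_pos h]
      funext ds
      have hwx : w f ≠ x := by
        intro he
        exact hb f h.2 (h.1 ▸ hfn) (he ▸ Set.mem_insert _ _)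
      rw [Function.update_of_ne hwx]
    · simp only [if_neg h]

theorem Fml.predSyms_repc (s : ℕ → Prop) (w : ℕ → ℕ) :
    ∀ F : Fml, (F.repc s w).predSyms = F.predSyms := by
  intro F
  induction F with
  | tru => rfl
  | fls => rfl
  | atom p n ts => rfl
  | neg F ih => simp [Fml.repc, Fml.predSyms, ih]
  | conj F G ihF ihG => simp [Fml.repc, Fml.predSyms, ihF, ihG]
  | disj F G ihF ihG => simp [Fml.repc, Fml.predSyms, ihF, ihG]
  | all x F ih => simp [Fml.repc, Fml.predSyms, ih]
  | exi x F ih => simp [Fml.repc, Fml.predSyms, ih]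

theorem Fml.bound_repc (s : ℕ → Prop) (w : ℕ → ℕ) :
    ∀ F : Fml, (F.repc s w).bound = F.bound := by
  intro F
  induction F with
  | tru => rfl
  | fls => rfl
  | atom p n ts => rfl
  | neg F ih => simp [Fml.repc, Fml.bound, ih]
  | conj F G ihF ihG => simp [Fml.repc, Fml.bound, ihF, ihG]
  | disj F G ihF ihG => simp [Fml.repc, Fml.bound, ihF, ihG]
  | all x F ih => simp [Fml.repc, Fml.bound, ih]
  | exi x F ih => simp [Fml.repc, Fml.bound, ih]

theorem Tm.vars_repc (s : ℕ → Prop) (w : ℕ → ℕ) :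
    ∀ t : Tm, (t.repc s w).vars ⊆ t.vars ∪ {u | ∃ f, s f ∧ w f = u} := by
  intro t
  induction t with
  | var y => simp [Tm.repc, Tm.vars]
  | app f n ts ih =>
    by_cases h : n = 0 ∧ s f
    · simp only [Tm.repc, if_pos h, Tm.vars]
      intro u hu
      simp only [Set.mem_singleton_iff] at hu
      exact Or.inr ⟨f, h.2, hu.symm⟩
    · simp only [Tm.repc, if_neg h, Tm.vars]
      intro u hu
      simp only [Set.mem_iUnion] at hu
      obtain ⟨i, hi⟩ := hu
      rcases ih i hi with h' | h'
      · exact Or.inl (Set.mem_iUnion.2 ⟨i, h'⟩)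
      · exact Or.inr h'

theorem Fml.free_repc (s : ℕ → Prop) (w : ℕ → ℕ) :
    ∀ F : Fml, (F.repc s w).free ⊆ F.free ∪ {u | ∃ f, s f ∧ w f = u} := by
  intro F
  induction F with
  | tru => simp [Fml.repc, Fml.free]
  | fls => simp [Fml.repc, Fml.free]
  | atom p n ts =>
    intro u hu
    simp only [Fml.repc, Fml.free, Set.mem_iUnion] at hu
    obtain ⟨i, hi⟩ := hu
    rcases Tm.vars_repc s w (ts i) hi with h | h
    · exact Or.inl (by simp only [Fml.free, Set.mem_iUnion]; exact ⟨i, h⟩)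
    · exact Or.inr h
  | neg F ih => exact ih
  | conj F G ihF ihG =>
    intro u hu
    rcases hu with h | h
    · rcases ihF h with h' | h'
      · exact Or.inl (Or.inl h')
      · exact Or.inr h'
    · rcases ihG h with h' | h'
      · exact Or.inl (Or.inr h')
      · exact Or.inr h'
  | disj F G ihF ihG =>
    intro u hu
    rcases hu with h | h
    · rcases ihF h with h' | h'
      · exact Or.inl (Or.inl h')
      · exact Or.inr h'
    · rcases ihG h with h' | h'
      · exact Or.inl (Or.inr h')
      · exact Or.inr h'
  | all x F ih =>
    intro u hu
    obtain ⟨hu1, hu2⟩ := hu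
    rcases ih hu1 with h' | h'
    · exact Or.inl ⟨h', hu2⟩
    · exact Or.inr h'
  | exi x F ih =>
    intro u hu
    obtain ⟨hu1, hu2⟩ := hu
    rcases ih hu1 with h' | h'
    · exact Or.inl ⟨h', hu2⟩
    · exact Or.inr h'

theorem Tm.funs_repc (s : ℕ → Prop) (w : ℕ → ℕ) :
    ∀ t : Tm, (t.repc s w).funs ⊆ t.funs := by
  intro t
  induction t with
  | var y => simp [Tm.repc, Tm.funs]
  | app f n ts ih =>
    by_cases h : n = 0 ∧ s f
    · simp [Tm.repc, if_pos h, Tm.funs]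
    · simp only [Tm.repc, if_neg h, Tm.funs]
      intro u hu
      rcases hu with rfl | hu
      · exact Set.mem_insert _ _
      · simp only [Set.mem_iUnion] at hu
        obtain ⟨i, hi⟩ := hu
        exact Set.mem_insert_iff.2 (Or.inr (Set.mem_iUnion.2 ⟨i, ih i hi⟩))

theorem Fml.funs_repc (s : ℕ → Prop) (w : ℕ → ℕ) :
    ∀ F : Fml, (F.repc s w).funs ⊆ F.funs := by
  intro F
  induction F with
  | tru => simp [Fml.repc, Fml.funs]
  | fls => simp [Fml.repc, Fml.funs]
  | atom p n ts =>
    intro u hu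
    simp only [Fml.repc, Fml.funs, Set.mem_iUnion] at hu ⊢
    obtain ⟨i, hi⟩ := hu
    exact ⟨i, Tm.funs_repc s w (ts i) hi⟩
  | neg F ih => exact ih
  | conj F G ihF ihG => exact Set.union_subset_union ihF ihG
  | disj F G ihF ihG => exact Set.union_subset_union ihF ihG
  | all x F ih => exact ih
  | exi x F ih => exact ih

theorem Tm.not_mem_funs_repc (s : ℕ → Prop) (w : ℕ → ℕ) {c : ℕ} (hc : s c) :
    ∀ t : Tm, (c, 0) ∉ (t.repc s w).funs := by
  intro t
  induction t with
  | var y => simp [Tm.repc, Tm.funs]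
  | app f n ts ih =>
    by_cases h : n = 0 ∧ s f
    · simp [Tm.repc, if_pos h, Tm.funs]
    · simp only [Tm.repc, if_neg h, Tm.funs]
      intro hu
      rcases hu with hu | hu
      · have h1 : c = f := congrArg Prod.fst hu
        have h2 : (0 : ℕ) = n := congrArg Prod.snd hu
        exact h ⟨h2.symm, h1 ▸ hc⟩
      · simp only [Set.mem_iUnion] at hu
        obtain ⟨i, hi⟩ := hu
        exact ih i hi

theorem Fml.not_mem_funs_repc (s : ℕ → Prop) (w : ℕ → ℕ) {c : ℕ} (hc : s c) :
    ∀ F : Fml, (c, 0) ∉ (F.repc s w).funs := by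
  intro F
  induction F with
  | tru => simp [Fml.repc, Fml.funs]
  | fls => simp [Fml.repc, Fml.funs]
  | atom p n ts =>
    intro hu
    simp only [Fml.repc, Fml.funs, Set.mem_iUnion] at hu
    obtain ⟨i, hi⟩ := hu
    exact Tm.not_mem_funs_repc s w hc (ts i) hi
  | neg F ih => exact ih
  | conj F G ihF ihG => intro hu; rcases hu with h | h; exacts [ihF h, ihG h]
  | disj F G ihF ihG => intro hu; rcases hu with h | h; exacts [ihF h, ihG h]
  | all x F ih => exact ih
  | exi x F ih => exact ih

/-! ### Countability of formulas -/

def Tm.code : Tm → ℕ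
  | .var x => Nat.pair 0 x
  | .app f n ts => Nat.pair 1 (Nat.pair f (Encodable.encode (List.ofFn fun i => (ts i).code)))

theorem Tm.code_inj : ∀ t u : Tm, t.code = u.code → t = u := by
  intro t
  induction t with
  | var x =>
    intro u h
    cases u with
    | var y =>
      simp only [Tm.code, Nat.pair_eq_pair] at h
      rw [h.2]
    | app g m us => simp [Tm.code, Nat.pair_eq_pair] at h
  | app f n ts ih =>
    intro u h
    cases u with
    | var y => simp [Tm.code, Nat.pair_eq_pair] at h
    | app g m us =>
      simp only [Tm.code, Nat.pair_eq_pair, true_and] at h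
      obtain ⟨h1, h2⟩ := h
      have h3 := Encodable.encode_injective h2
      have hnm : n = m := by
        have := congrArg List.length h3
        simpa using this
      subst hnm
      have h4 := List.ofFn_injective h3
      have h5 : ts = us := by
        funext i
        exact ih i (us i) (congrFun h4 i)
      rw [h1, h5]

def Fml.code : Fml → ℕ
  | .tru => Nat.pair 0 0
  | .fls => Nat.pair 1 0
  | .atom p n ts => Nat.pair 2 (Nat.pair p (Encodable.encode (List.ofFn fun i => (ts i).code)))
  | .neg F => Nat.pair 3 F.code
  | .conj F G => Nat.pair 4 (Nat.pair F.code G.code)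
  | .disj F G => Nat.pair 5 (Nat.pair F.code G.code)
  | .all x F => Nat.pair 6 (Nat.pair x F.code)
  | .exi x F => Nat.pair 7 (Nat.pair x F.code)

theorem Fml.code_inj : ∀ F G : Fml, F.code = G.code → F = G := by
  intro F
  induction F with
  | tru => intro G h; cases G <;> simp [Fml.code, Nat.pair_eq_pair] at h ⊢
  | fls => intro G h; cases G <;> simp [Fml.code, Nat.pair_eq_pair] at h ⊢
  | atom p n ts =>
    intro G h
    cases G <;> simp only [Fml.code, Nat.pair_eq_pair] at h <;> try omega
    rename_i q m us
    obtain ⟨-, h1, h2⟩ := h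
    have h3 := Encodable.encode_injective h2
    have hnm : n = m := by simpa using congrArg List.length h3
    subst hnm
    have h4 := List.ofFn_injective h3
    have h5 : ts = us := funext fun i => Tm.code_inj (ts i) (us i) (congrFun h4 i)
    rw [h1, h5]
  | neg F ih =>
    intro G h
    cases G <;> simp only [Fml.code, Nat.pair_eq_pair] at h <;> try omega
    rename_i G'
    rw [ih G' h.2]
  | conj F1 F2 ih1 ih2 =>
    intro G h
    cases G <;> simp only [Fml.code, Nat.pair_eq_pair] at h <;> try omega
    rename_i G1 G2
    obtain ⟨-, h1, h2⟩ := h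
    rw [ih1 G1 h1, ih2 G2 h2]
  | disj F1 F2 ih1 ih2 =>
    intro G h
    cases G <;> simp only [Fml.code, Nat.pair_eq_pair] at h <;> try omega
    rename_i G1 G2
    obtain ⟨-, h1, h2⟩ := h
    rw [ih1 G1 h1, ih2 G2 h2]
  | all x F ih =>
    intro G h
    cases G <;> simp only [Fml.code, Nat.pair_eq_pair] at h <;> try omega
    rename_i y G'
    obtain ⟨-, h1, h2⟩ := h
    rw [h1, ih G' h2]
  | exi x F ih =>
    intro G h
    cases G <;> simp only [Fml.code, Nat.pair_eq_pair] at h <;> try omega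
    rename_i y G'
    obtain ⟨-, h1, h2⟩ := h
    rw [h1, ih G' h2]

instance : Countable Fml := ⟨⟨Fml.code, fun _ _ h => Fml.code_inj _ _ h⟩⟩

instance : Nonempty Fml := ⟨.tru⟩

/-- A fixed enumeration of all formulas. -/
noncomputable def enum : ℕ → Fml := (exists_surjective_nat Fml).choose

theorem enum_surj : Function.Surjective enum := (exists_surjective_nat Fml).choose_spec

/-! ### Setup for the interpolation argument -/

/-- The constant used as a witness / abstraction constant. -/
def cstC (c : ℕ) : Tm := .app c 0 (fun i => i.elim0)

/-- Entailment from a finite list of premises. -/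
def entailsL (Γ : List Fml) (G : Fml) : Prop :=
  ∀ (D : Type), Nonempty D → ∀ (M : Struc D) (a : ℕ → D), (∀ φ ∈ Γ, φ.sat M a) → G.sat M a

theorem entailsL_mono {T T' : List Fml} (h : ∀ φ ∈ T, φ ∈ T') {θ : Fml}
    (he : entailsL T θ) : entailsL T' θ :=
  fun D hD M a ha => he D hD M a (fun φ hφ => ha φ (h φ hφ))

theorem entailsL_dup {T : List Fml} {φ θ : Fml} (hφ : φ ∈ T)
    (h : entailsL (T ++ [φ]) θ) : entailsL T θ := by
  intro D hD M a ha
  refine h D hD M a (fun ψ hψ => ?_)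
  rcases List.mem_append.1 hψ with h' | h'
  · exact ha ψ h'
  · simp at h'; subst h'; exact ha ψ hφ

/-- Data for a Craig-interpolation problem `A ⊨ B`, with a bound `N` on function
symbols and a bound `K` on variables occurring in `A` and `B`. -/
structure Setup where
  A : Fml
  B : Fml
  N : ℕ
  K : ℕ
  hN1 : 1 ≤ N
  hNfun : ∀ f n, (f, n) ∈ A.funs ∪ B.funs → f < N
  hKvar : ∀ v, v ∈ A.free ∪ A.bound ∪ B.free ∪ B.bound → v < K

theorem setup_exists (A B : Fml) : ∃ S : Setup, S.A = A ∧ S.B = B := by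
  have h1 : ((A.funs ∪ B.funs).image Prod.fst).Finite :=
    ((A.finite_funs.union B.finite_funs).image _)
  have h2 : (A.free ∪ A.bound ∪ B.free ∪ B.bound).Finite :=
    ((A.finite_free.union A.finite_bound).union B.finite_free).union B.finite_bound
  obtain ⟨N0, hN0⟩ := h1.bddAbove
  obtain ⟨K0, hK0⟩ := h2.bddAbove
  exact ⟨⟨A, B, N0 + 1, K0 + 1, Nat.succ_le_succ (Nat.zero_le _),
    fun f n hf => by
      have := hN0 (Set.mem_image_of_mem Prod.fst hf)
      simpa using Nat.lt_succ_of_le this,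
    fun v hv => Nat.lt_succ_of_le (hK0 hv)⟩, rfl, rfl⟩

namespace Setup

variable (S : Setup)

def P1 : Set ℕ := S.A.predSyms
def P2 : Set ℕ := S.B.predSyms

/-- Abstraction constant for variable `v`. -/
def cst (v : ℕ) : Tm := cstC (S.N + 2 * v)

def σ0 : Subst := fun v => S.cst v

def A0 : Fml := S.A.subst S.σ0
def B0 : Fml := S.B.subst S.σ0

/-- Allowed function symbols: everything except abstraction constants for
variables `≥ K`. -/
def SOK (f n : ℕ) : Prop := ∀ v, S.K ≤ v → (f, n) ≠ (S.N + 2 * v, 0)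

def DOk (t : Tm) : Prop := t.vars = ∅ ∧ ∀ f n, (f, n) ∈ t.funs → S.SOK f n

def LGood (P : Set ℕ) (φ : Fml) : Prop :=
  φ.free = ∅ ∧ φ.predSyms ⊆ P ∧ ∀ f n, (f, n) ∈ φ.funs → S.SOK f n

def GoodSep (θ : Fml) : Prop := S.LGood (S.P1 ∩ S.P2) θ ∧ ∀ y ∈ θ.bound, S.K ≤ y

def Sep (T U : List Fml) : Prop :=
  ∃ θ, S.GoodSep θ ∧ entailsL T θ ∧ entailsL U θ.neg

theorem Sep_mono {T T' U U' : List Fml} (hT : ∀ φ ∈ T, φ ∈ T') (hU : ∀ φ ∈ U, φ ∈ U')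
    (h : S.Sep T U) : S.Sep T' U' := by
  obtain ⟨θ, h1, h2, h3⟩ := h
  exact ⟨θ, h1, entailsL_mono hT h2, entailsL_mono hU h3⟩

theorem LGood_neg {P : Set ℕ} {φ : Fml} (h : S.LGood P φ) : S.LGood P φ.neg := h

theorem LGood_of_neg {P : Set ℕ} {φ : Fml} (h : S.LGood P φ.neg) : S.LGood P φ := h

/-- GoodSep separators exist for trivial cases. -/
theorem GoodSep_fls : S.GoodSep .fls :=
  ⟨⟨rfl, by simp [Fml.predSyms], by simp [Fml.funs]⟩, by simp [Fml.bound]⟩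

theorem GoodSep_tru : S.GoodSep .tru :=
  ⟨⟨rfl, by simp [Fml.predSyms], by simp [Fml.funs]⟩, by simp [Fml.bound]⟩

/-- If `T ⊨ ⊥` then the pair is separable. -/
theorem Sep_of_bot {T U : List Fml} (h : entailsL T .fls) : S.Sep T U :=
  ⟨.fls, S.GoodSep_fls, h, fun D hD M a _ => fun hc => hc⟩

theorem Sep_of_bot' {T U : List Fml} (h : entailsL U .fls) : S.Sep T U :=
  ⟨.tru, S.GoodSep_tru, fun D hD M a _ => trivial, fun D hD M a ha => (h D hD M a ha).elim⟩

/-- Binary choice lemma, `T` side. -/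
theorem choiceT {T U : List Fml} (h : ¬S.Sep T U) (φ : Fml) :
    ¬S.Sep (T ++ [φ]) U ∨ ¬S.Sep (T ++ [φ.neg]) U := by
  by_contra hc
  push_neg at hc
  obtain ⟨h1, h2⟩ := hc
  obtain ⟨θ1, g1, e1, u1⟩ := h1
  obtain ⟨θ2, g2, e2, u2⟩ := h2
  refine h ⟨.disj θ1 θ2, ?_, ?_, ?_⟩
  · refine ⟨⟨?_, ?_, ?_⟩, ?_⟩
    · show θ1.free ∪ θ2.free = ∅
      rw [g1.1.1, g2.1.1]; simp
    · exact Set.union_subset g1.1.2.1 g2.1.2.1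
    · intro f n hf
      rcases hf with hf | hf
      exacts [g1.1.2.2 f n hf, g2.1.2.2 f n hf]
    · intro y hy
      rcases hy with hy | hy
      exacts [g1.2 y hy, g2.2 y hy]
  · intro D hD M a ha
    by_cases hφ : φ.sat M a
    · refine Or.inl (e1 D hD M a (fun ψ hψ => ?_))
      rcases List.mem_append.1 hψ with h' | h'
      · exact ha ψ h'
      · simp at h'; subst h'; exact hφ
    · refine Or.inr (e2 D hD M a (fun ψ hψ => ?_))
      rcases List.mem_append.1 hψ with h' | h'
      · exact ha ψ h'
      · simp at h'; subst h'; exact hφ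
  · intro D hD M a ha
    have n1 := u1 D hD M a ha
    have n2 := u2 D hD M a ha
    intro hd
    rcases hd with hd | hd
    exacts [n1 hd, n2 hd]

/-- Binary choice lemma, `U` side. -/
theorem choiceU {T U : List Fml} (h : ¬S.Sep T U) (φ : Fml) :
    ¬S.Sep T (U ++ [φ]) ∨ ¬S.Sep T (U ++ [φ.neg]) := by
  by_contra hc
  push_neg at hc
  obtain ⟨h1, h2⟩ := hc
  obtain ⟨θ1, g1, e1, u1⟩ := h1
  obtain ⟨θ2, g2, e2, u2⟩ := h2
  refine h ⟨.conj θ1 θ2, ?_, ?_, ?_⟩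
  · refine ⟨⟨?_, ?_, ?_⟩, ?_⟩
    · show θ1.free ∪ θ2.free = ∅
      rw [g1.1.1, g2.1.1]; simp
    · exact Set.union_subset g1.1.2.1 g2.1.2.1
    · intro f n hf
      rcases hf with hf | hf
      exacts [g1.1.2.2 f n hf, g2.1.2.2 f n hf]
    · intro y hy
      rcases hy with hy | hy
      exacts [g1.2 y hy, g2.2 y hy]
  · intro D hD M a ha
    exact ⟨e1 D hD M a ha, e2 D hD M a ha⟩
  · intro D hD M a ha
    by_cases hφ : φ.sat M a
    · have := u1 D hD M a (fun ψ hψ => ?_)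
      · intro hd; exact this hd.1
      · rcases List.mem_append.1 hψ with h' | h'
        · exact ha ψ h'
        · simp at h'; subst h'; exact hφ
    · have := u2 D hD M a (fun ψ hψ => ?_)
      · intro hd; exact this hd.2
      · rcases List.mem_append.1 hψ with h' | h'
        · exact ha ψ h'
        · simp at h'; subst h'; exact hφ

end Setup

/-! ### Freshness and witness lemmas -/

theorem cstC_vars (c : ℕ) : (cstC c).vars = ∅ := by
  simp [cstC, Tm.vars]

theorem cstC_funs (c : ℕ) : (cstC c).funs = {(c, 0)} := by
  simp [cstC, Tm.funs]

theorem GI_wit (x : ℕ) (c : ℕ) : GI (Function.update Tm.var x (cstC c)) := by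
  intro v
  rcases eq_or_ne v x with rfl | hne
  · exact Or.inr (by simp [cstC_vars])
  · simp [Function.update_of_ne hne]

theorem GI_σ0 (S : Setup) : GI S.σ0 := fun v => Or.inr (cstC_vars _)

theorem funs_bound_list (L : List Fml) : ∃ m, ∀ φ ∈ L, ∀ f n, (f, n) ∈ φ.funs → f ≤ m := by
  induction L with
  | nil => exact ⟨0, by simp⟩
  | cons φ L ih =>
    obtain ⟨m, hm⟩ := ih
    obtain ⟨m', hm'⟩ := (φ.finite_funs.image Prod.fst).bddAbove
    refine ⟨max m m', fun ψ hψ f n hf => ?_⟩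
    rcases List.mem_cons.1 hψ with rfl | hψ
    · exact le_max_of_le_right (hm' (Set.mem_image_of_mem _ hf))
    · exact le_max_of_le_left (hm ψ hψ f n hf)

theorem exists_freshC (S : Setup) (L : List Fml) :
    ∃ c, S.SOK c 0 ∧ ∀ φ ∈ L, (c, 0) ∉ φ.funs := by
  obtain ⟨m, hm⟩ := funs_bound_list L
  refine ⟨S.N + 2 * m + 1, fun v _ h => ?_, fun φ hφ hc => ?_⟩
  · have := congrArg Prod.fst h
    simp only at this
    omega
  · have h1 := hm φ hφ _ _ hc
    have h2 := S.hN1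
    omega

theorem exists_freshY (S : Setup) (θ : Fml) :
    ∃ y, S.K ≤ y ∧ y ∉ θ.bound ∧ y ∉ θ.free := by
  obtain ⟨m, hm⟩ := (θ.finite_bound.union θ.finite_free).bddAbove
  refine ⟨max S.K (m + 1), le_max_left _ _, fun h => ?_, fun h => ?_⟩
  · have := hm (Set.mem_union_left _ h); omega
  · have := hm (Set.mem_union_right _ h); omega

/-- Satisfaction is unchanged when reinterpreting a non-occurring constant. -/
theorem sat_McD_fresh {D : Type} {M : Struc D} {a : ℕ → D} {φ : Fml} {c : ℕ}
    (hc : (c, 0) ∉ φ.funs) (g : ℕ → D) :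
    φ.sat (McD M (· = c) g) a ↔ φ.sat M a := by
  refine Fml.sat_congr φ a a (fun f n hf => ?_) (fun _ _ _ => rfl) (fun _ _ => rfl)
  funext ds
  simp only [McD]
  rw [if_neg]
  rintro ⟨rfl, rfl⟩
  exact hc hf

theorem eval_cstC_McD {D : Type} {M : Struc D} {a : ℕ → D} {c : ℕ} (g : ℕ → D) :
    (cstC c).eval (McD M (· = c) g) a = g c := by
  simp [cstC, Tm.eval, McD]

/-- Satisfaction of the witness instance in the `c ↦ d` reinterpretation. -/
theorem sat_inst_McD {D : Type} {M : Struc D} {a : ℕ → D} {ψ : Fml} {x c : ℕ} {d : D}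
    (hc : (c, 0) ∉ ψ.funs) :
    (ψ.subst (Function.update Tm.var x (cstC c))).sat (McD M (· = c) (fun _ => d)) a ↔
      ψ.sat M (Function.update a x d) := by
  rw [Fml.sat_subst _ _ _ (GI_wit x c)]
  have he : (fun v => ((Function.update Tm.var x (cstC c)) v).eval (McD M (· = c) (fun _ => d)) a)
      = Function.update a x d := by
    funext v
    rcases eq_or_ne v x with rfl | hne
    · simp only [Function.update_self]
      exact eval_cstC_McD _
    · simp only [Function.update_of_ne hne]
      rfl
  rw [he]
  exact sat_McD_fresh hc _

/-- Unfolding satisfaction of the abstracted separator. -/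
theorem sat_repc_abs {D : Type} {M : Struc D} {a : ℕ → D} {θ : Fml} {c y : ℕ}
    (hθfree : θ.free = ∅) (hyb : y ∉ θ.bound) (e : D) :
    ((θ.repc (· = c) (fun _ => y)).sat M (Function.update a y e)) ↔
      θ.sat (McD M (· = c) (fun _ => e)) a := by
  rw [Fml.sat_repc θ _ (fun f _ _ => hyb)]
  have hg : (fun f : ℕ => Function.update a y e ((fun _ : ℕ => y) f)) = fun _ : ℕ => e :=
    funext fun _ => Function.update_self _ _ _
  rw [hg]
  exact Fml.sat_sentence hθfree _ _

namespace Setup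

variable (S : Setup)

theorem LGood_subst0 {P : Set ℕ} {F : Fml} (hP : F.predSyms ⊆ P)
    (hfun : ∀ f n, (f, n) ∈ F.funs → f < S.N)
    (hvar : ∀ v ∈ F.free, v < S.K) :
    S.LGood P (F.subst S.σ0) := by
  refine ⟨?_, ?_, ?_⟩
  · refine Set.eq_empty_of_subset_empty ((F.free_subst S.σ0).trans ?_)
    intro u hu
    simp only [Set.mem_iUnion] at hu
    obtain ⟨v, _, hv2⟩ := hu
    rw [show S.σ0 v = cstC (S.N + 2 * v) from rfl, cstC_vars] at hv2
    exact hv2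
  · rw [F.predSyms_subst]; exact hP
  · intro f n hf
    rcases F.funs_subst S.σ0 hf with h | h
    · intro v _ hv
      have h1 := hfun f n h
      have h2 := congrArg Prod.fst hv
      simp only at h2
      omega
    · simp only [Set.mem_iUnion] at h
      obtain ⟨v, hv1, hv2⟩ := h
      rw [show S.σ0 v = cstC (S.N + 2 * v) from rfl, cstC_funs] at hv2
      simp only [Set.mem_singleton_iff, Prod.mk.injEq] at hv2
      obtain ⟨rfl, rfl⟩ := hv2
      intro u hu he
      have h1 := congrArg Prod.fst he
      simp only at h1
      have h2 := hvar v hv1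
      omega

theorem LGood_A0 : S.LGood S.P1 S.A0 :=
  S.LGood_subst0 (le_refl _)
    (fun f n hf => S.hNfun f n (Or.inl hf))
    (fun v hv => S.hKvar v (Or.inl (Or.inl (Or.inl hv))))

theorem LGood_B0neg : S.LGood S.P2 S.B0.neg :=
  S.LGood_subst0 (P := S.P2) (le_refl _)
    (fun f n hf => S.hNfun f n (Or.inr hf))
    (fun v hv => S.hKvar v (Or.inl (Or.inr hv)))

/-- GoodSep-ness of the existentially abstracted separator. -/
theorem GoodSep_absE {θ : Fml} (hg : S.GoodSep θ) {c y : ℕ} (hyK : S.K ≤ y) :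
    S.GoodSep (.exi y (θ.repc (· = c) (fun _ => y))) := by
  refine ⟨⟨?_, ?_, ?_⟩, ?_⟩
  · show (θ.repc (· = c) (fun _ => y)).free \ {y} = ∅
    refine Set.eq_empty_of_subset_empty ?_
    intro u hu
    obtain ⟨hu1, hu2⟩ := hu
    rcases Fml.free_repc _ _ θ hu1 with h | h
    · rw [hg.1.1] at h; exact absurd h (Set.notMem_empty u)
    · obtain ⟨f, _, hf⟩ := h
      exact absurd hf.symm hu2
  · show (θ.repc (· = c) (fun _ => y)).predSyms ⊆ _
    rw [Fml.predSyms_repc]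
    exact hg.1.2.1
  · intro f n hf
    exact hg.1.2.2 f n (Fml.funs_repc _ _ θ hf)
  · intro z hz
    rcases hz with rfl | hz
    · exact hyK
    · rw [Fml.bound_repc] at hz
      exact hg.2 z hz

/-- GoodSep-ness of the universally abstracted separator. -/
theorem GoodSep_absA {θ : Fml} (hg : S.GoodSep θ) {c y : ℕ} (hyK : S.K ≤ y) :
    S.GoodSep (.all y (θ.repc (· = c) (fun _ => y))) := by
  refine ⟨⟨?_, ?_, ?_⟩, ?_⟩
  · show (θ.repc (· = c) (fun _ => y)).free \ {y} = ∅
    refine Set.eq_empty_of_subset_empty ?_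
    intro u hu
    obtain ⟨hu1, hu2⟩ := hu
    rcases Fml.free_repc _ _ θ hu1 with h | h
    · rw [hg.1.1] at h; exact absurd h (Set.notMem_empty u)
    · obtain ⟨f, _, hf⟩ := h
      exact absurd hf.symm hu2
  · show (θ.repc (· = c) (fun _ => y)).predSyms ⊆ _
    rw [Fml.predSyms_repc]
    exact hg.1.2.1
  · intro f n hf
    exact hg.1.2.2 f n (Fml.funs_repc _ _ θ hf)
  · intro z hz
    rcases hz with rfl | hz
    · exact hyK
    · rw [Fml.bound_repc] at hz
      exact hg.2 z hz

/-- Witness lemma, `T` side. -/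
theorem witT {T U : List Fml} {x : ℕ} {ψ : Fml} {c : ℕ}
    (hfT : ∀ φ ∈ T, (c, 0) ∉ φ.funs) (hfU : ∀ φ ∈ U, (c, 0) ∉ φ.funs)
    (hfψ : (c, 0) ∉ ψ.funs)
    (h : ¬S.Sep (T ++ [.exi x ψ]) U) :
    ¬S.Sep (T ++ [.exi x ψ, ψ.subst (Function.update Tm.var x (cstC c))]) U := by
  intro hsep
  apply h
  obtain ⟨θ, hg, he, hu⟩ := hsep
  obtain ⟨y, hyK, hyb, hyf⟩ := exists_freshY S θ
  refine ⟨.exi y (θ.repc (· = c) (fun _ => y)), S.GoodSep_absE hg hyK, ?_, ?_⟩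
  · intro D hD M a ha
    have hexi : ∃ d, ψ.sat M (Function.update a x d) := ha (Fml.exi x ψ) (by simp)
    obtain ⟨d, hd⟩ := hexi
    have hθ : θ.sat (McD M (· = c) (fun _ => d)) a := by
      refine he D hD _ a (fun φ hφ => ?_)
      rcases List.mem_append.1 hφ with h' | h'
      · exact (sat_McD_fresh (hfT φ h') _).2 (ha φ (List.mem_append.2 (Or.inl h')))
      · rcases List.mem_cons.1 h' with rfl | h'
        · exact show ∃ d', ψ.sat (McD M (· = c) (fun _ => d)) (Function.update a x d') from
            ⟨d, (sat_McD_fresh (a := Function.update a x d) hfψ _).2 hd⟩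
        · rcases List.mem_cons.1 h' with rfl | h'
          · exact (sat_inst_McD hfψ).2 hd
          · exact absurd h' (List.not_mem_nil)
    exact show ∃ e, (θ.repc (· = c) (fun _ => y)).sat M (Function.update a y e) from
      ⟨d, (sat_repc_abs hg.1.1 hyb d).2 hθ⟩
  · intro D hD M a ha
    intro hc
    obtain ⟨e, he'⟩ : ∃ e, (θ.repc (· = c) (fun _ => y)).sat M (Function.update a y e) := hc
    have hθ : θ.sat (McD M (· = c) (fun _ => e)) a := (sat_repc_abs hg.1.1 hyb e).1 he'
    refine hu D hD (McD M (· = c) (fun _ => e)) a (fun φ hφ => ?_) hθ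
    exact (sat_McD_fresh (hfU φ hφ) _).2 (ha φ hφ)

/-- Witness lemma, `U` side. -/
theorem witU {T U : List Fml} {x : ℕ} {ψ : Fml} {c : ℕ}
    (hfT : ∀ φ ∈ T, (c, 0) ∉ φ.funs) (hfU : ∀ φ ∈ U, (c, 0) ∉ φ.funs)
    (hfψ : (c, 0) ∉ ψ.funs)
    (h : ¬S.Sep T (U ++ [.exi x ψ])) :
    ¬S.Sep T (U ++ [.exi x ψ, ψ.subst (Function.update Tm.var x (cstC c))]) := by
  intro hsep
  apply h
  obtain ⟨θ, hg, he, hu⟩ := hsep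
  obtain ⟨y, hyK, hyb, hyf⟩ := exists_freshY S θ
  refine ⟨.all y (θ.repc (· = c) (fun _ => y)), S.GoodSep_absA hg hyK, ?_, ?_⟩
  · intro D hD M a ha
    intro e
    rw [sat_repc_abs hg.1.1 hyb e]
    refine he D hD _ a (fun φ hφ => ?_)
    exact (sat_McD_fresh (hfT φ hφ) _).2 (ha φ hφ)
  · intro D hD M a ha
    intro hall
    have hall' : ∀ e, (θ.repc (· = c) (fun _ => y)).sat M (Function.update a y e) := hall
    have hexi : ∃ d, ψ.sat M (Function.update a x d) := ha (Fml.exi x ψ) (by simp)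
    obtain ⟨d, hd⟩ := hexi
    have hsatU : ∀ φ ∈ U ++ [Fml.exi x ψ, ψ.subst (Function.update Tm.var x (cstC c))],
        φ.sat (McD M (· = c) (fun _ => d)) a := by
      intro φ hφ
      rcases List.mem_append.1 hφ with h' | h'
      · exact (sat_McD_fresh (hfU φ h') _).2 (ha φ (List.mem_append.2 (Or.inl h')))
      · rcases List.mem_cons.1 h' with rfl | h'
        · exact show ∃ d', ψ.sat (McD M (· = c) (fun _ => d)) (Function.update a x d') from
            ⟨d, (sat_McD_fresh (a := Function.update a x d) hfψ _).2 hd⟩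
        · rcases List.mem_cons.1 h' with rfl | h'
          · exact (sat_inst_McD hfψ).2 hd
          · exact absurd h' (List.not_mem_nil)
    have := hu D hD _ a hsatU
    exact this ((sat_repc_abs hg.1.1 hyb d).1 (hall' d))

end Setup

/-! ### The Henkin-style completion of an inseparable pair -/

theorem Fml.ne_neg (φ : Fml) : φ ≠ φ.neg := by
  intro h
  have := congrArg Fml.size h
  simp [Fml.size] at this

namespace Setup

variable (S : Setup)

theorem Sep_of_mem {T U : List Fml} {φ : Fml} (hm : φ ∈ T)
    (h : S.Sep (T ++ [φ]) U) : S.Sep T U := by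
  obtain ⟨θ, g, e, u⟩ := h
  exact ⟨θ, g, entailsL_dup hm e, u⟩

theorem Sep_of_mem' {T U : List Fml} {φ : Fml} (hm : φ ∈ U)
    (h : S.Sep T (U ++ [φ])) : S.Sep T U := by
  obtain ⟨θ, g, e, u⟩ := h
  exact ⟨θ, g, e, entailsL_dup hm u⟩

theorem LGood_subst_single {P : Set ℕ} {ψ : Fml} {x : ℕ} {t : Tm}
    (h1 : ψ.free ⊆ {x}) (h2 : ψ.predSyms ⊆ P) (h3 : ∀ f n, (f, n) ∈ ψ.funs → S.SOK f n)
    (ht1 : t.vars = ∅) (ht2 : ∀ f n, (f, n) ∈ t.funs → S.SOK f n) :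
    S.LGood P (ψ.subst (Function.update Tm.var x t)) := by
  refine ⟨?_, ?_, ?_⟩
  · refine Set.eq_empty_of_subset_empty ((ψ.free_subst _).trans ?_)
    intro u hu
    simp only [Set.mem_iUnion] at hu
    obtain ⟨v, hv1, hv2⟩ := hu
    have := h1 hv1
    simp only [Set.mem_singleton_iff] at this
    subst this
    rw [Function.update_self] at hv2
    rw [ht1] at hv2
    exact hv2
  · rw [ψ.predSyms_subst]; exact h2
  · intro f n hf
    rcases ψ.funs_subst _ hf with h | h
    · exact h3 f n h
    · simp only [Set.mem_iUnion] at h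
      obtain ⟨v, hv1, hv2⟩ := h
      rcases eq_or_ne v x with rfl | hne
      · rw [Function.update_self] at hv2
        exact ht2 f n hv2
      · rw [Function.update_of_ne hne] at hv2
        simp only [Tm.funs] at hv2
        exact absurd hv2 (Set.notMem_empty _)

/-- Properties of one `T`-side extension step. -/
def TStep (T T' U : List Fml) (φ : Fml) : Prop :=
  (∀ ψ ∈ T, ψ ∈ T') ∧ ¬S.Sep T' U ∧ (∀ ψ ∈ T', S.LGood S.P1 ψ) ∧
  (S.LGood S.P1 φ →
    (φ ∈ T' ∨ φ.neg ∈ T') ∧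
    ∀ x ψ, φ = .exi x ψ → φ ∈ T' → ∃ c, S.SOK c 0 ∧
      ψ.subst (Function.update Tm.var x (cstC c)) ∈ T')

def UStep (T U U' : List Fml) (φ : Fml) : Prop :=
  (∀ ψ ∈ U, ψ ∈ U') ∧ ¬S.Sep T U' ∧ (∀ ψ ∈ U', S.LGood S.P2 ψ) ∧
  (S.LGood S.P2 φ →
    (φ ∈ U' ∨ φ.neg ∈ U') ∧
    ∀ x ψ, φ = .exi x ψ → φ ∈ U' → ∃ c, S.SOK c 0 ∧
      ψ.subst (Function.update Tm.var x (cstC c)) ∈ U')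

theorem stepT {T U : List Fml} (hsep : ¬S.Sep T U) (hTG : ∀ ψ ∈ T, S.LGood S.P1 ψ)
    (φ : Fml) : ∃ T', S.TStep T T' U φ := by
  by_cases hLG : S.LGood S.P1 φ
  · by_cases h1 : S.Sep (T ++ [φ]) U
    · have h2 : ¬S.Sep (T ++ [φ.neg]) U := by
        rcases S.choiceT hsep φ with h2 | h2
        · exact absurd h1 h2
        · exact h2
      have hφT : φ ∉ T := fun hm => hsep (S.Sep_of_mem hm h1)
      refine ⟨T ++ [φ.neg], fun ψ hψ => List.mem_append.2 (Or.inl hψ), h2, ?_, ?_⟩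
      · intro ψ hψ
        rcases List.mem_append.1 hψ with h' | h'
        · exact hTG ψ h'
        · simp only [List.mem_singleton] at h'
          subst h'
          exact hLG
      · intro _
        refine ⟨Or.inr (List.mem_append.2 (Or.inr (by simp))), ?_⟩
        intro x ψ heq hmem
        rcases List.mem_append.1 hmem with h' | h'
        · exact absurd h' hφT
        · simp only [List.mem_singleton] at h'
          exact absurd h' φ.ne_neg
    · by_cases h2 : ∃ x ψ, φ = Fml.exi x ψ
      · obtain ⟨x, ψ, rfl⟩ := h2
        obtain ⟨c, hcS, hcf⟩ := exists_freshC S (T ++ U ++ [Fml.exi x ψ])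
        have hfψ : (c, 0) ∉ ψ.funs := hcf (Fml.exi x ψ) (by simp)
        have h3 := S.witT (fun ψ' h => hcf ψ' (by simp [h])) (fun ψ' h => hcf ψ' (by simp [h]))
          hfψ h1
        refine ⟨T ++ [Fml.exi x ψ, ψ.subst (Function.update Tm.var x (cstC c))],
          fun ψ' hψ => List.mem_append.2 (Or.inl hψ), h3, ?_, ?_⟩
        · intro ψ' hψ'
          rcases List.mem_append.1 hψ' with h' | h'
          · exact hTG ψ' h'
          · rcases List.mem_cons.1 h' with rfl | h'
            · exact hLG
            · rcases List.mem_cons.1 h' with rfl | h'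
              · refine S.LGood_subst_single ?_ hLG.2.1 hLG.2.2 (cstC_vars c) ?_
                · intro v hv
                  by_contra hne
                  have : v ∈ (Fml.exi x ψ).free := ⟨hv, hne⟩
                  rw [hLG.1] at this
                  exact this
                · intro f n hf
                  rw [cstC_funs] at hf
                  simp only [Set.mem_singleton_iff, Prod.mk.injEq] at hf
                  obtain ⟨rfl, rfl⟩ := hf
                  exact hcS
              · exact absurd h' (List.not_mem_nil)
        · intro _
          refine ⟨Or.inl (List.mem_append.2 (Or.inr (by simp))), ?_⟩
          intro x' ψ' heq _
          cases heq
          exact ⟨c, hcS, List.mem_append.2 (Or.inr (by simp))⟩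
      · refine ⟨T ++ [φ], fun ψ hψ => List.mem_append.2 (Or.inl hψ), h1, ?_, ?_⟩
        · intro ψ hψ
          rcases List.mem_append.1 hψ with h' | h'
          · exact hTG ψ h'
          · simp only [List.mem_singleton] at h'
            subst h'
            exact hLG
        · intro _
          refine ⟨Or.inl (List.mem_append.2 (Or.inr (by simp))), ?_⟩
          intro x ψ heq _
          exact absurd ⟨x, ψ, heq⟩ h2
  · exact ⟨T, fun ψ hψ => hψ, hsep, hTG, fun h => absurd h hLG⟩

theorem stepU {T U : List Fml} (hsep : ¬S.Sep T U) (hUG : ∀ ψ ∈ U, S.LGood S.P2 ψ)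
    (φ : Fml) : ∃ U', S.UStep T U U' φ := by
  by_cases hLG : S.LGood S.P2 φ
  · by_cases h1 : S.Sep T (U ++ [φ])
    · have h2 : ¬S.Sep T (U ++ [φ.neg]) := by
        rcases S.choiceU hsep φ with h2 | h2
        · exact absurd h1 h2
        · exact h2
      have hφU : φ ∉ U := fun hm => hsep (S.Sep_of_mem' hm h1)
      refine ⟨U ++ [φ.neg], fun ψ hψ => List.mem_append.2 (Or.inl hψ), h2, ?_, ?_⟩
      · intro ψ hψ
        rcases List.mem_append.1 hψ with h' | h'
        · exact hUG ψ h'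
        · simp only [List.mem_singleton] at h'
          subst h'
          exact hLG
      · intro _
        refine ⟨Or.inr (List.mem_append.2 (Or.inr (by simp))), ?_⟩
        intro x ψ heq hmem
        rcases List.mem_append.1 hmem with h' | h'
        · exact absurd h' hφU
        · simp only [List.mem_singleton] at h'
          exact absurd h' φ.ne_neg
    · by_cases h2 : ∃ x ψ, φ = Fml.exi x ψ
      · obtain ⟨x, ψ, rfl⟩ := h2
        obtain ⟨c, hcS, hcf⟩ := exists_freshC S (T ++ U ++ [Fml.exi x ψ])
        have hfψ : (c, 0) ∉ ψ.funs := hcf (Fml.exi x ψ) (by simp)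
        have h3 := S.witU (fun ψ' h => hcf ψ' (by simp [h])) (fun ψ' h => hcf ψ' (by simp [h]))
          hfψ h1
        refine ⟨U ++ [Fml.exi x ψ, ψ.subst (Function.update Tm.var x (cstC c))],
          fun ψ' hψ => List.mem_append.2 (Or.inl hψ), h3, ?_, ?_⟩
        · intro ψ' hψ'
          rcases List.mem_append.1 hψ' with h' | h'
          · exact hUG ψ' h'
          · rcases List.mem_cons.1 h' with rfl | h'
            · exact hLG
            · rcases List.mem_cons.1 h' with rfl | h'
              · refine S.LGood_subst_single ?_ hLG.2.1 hLG.2.2 (cstC_vars c) ?_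
                · intro v hv
                  by_contra hne
                  have : v ∈ (Fml.exi x ψ).free := ⟨hv, hne⟩
                  rw [hLG.1] at this
                  exact this
                · intro f n hf
                  rw [cstC_funs] at hf
                  simp only [Set.mem_singleton_iff, Prod.mk.injEq] at hf
                  obtain ⟨rfl, rfl⟩ := hf
                  exact hcS
              · exact absurd h' (List.not_mem_nil)
        · intro _
          refine ⟨Or.inl (List.mem_append.2 (Or.inr (by simp))), ?_⟩
          intro x' ψ' heq _
          cases heq
          exact ⟨c, hcS, List.mem_append.2 (Or.inr (by simp))⟩
      · refine ⟨U ++ [φ], fun ψ hψ => List.mem_append.2 (Or.inl hψ), h1, ?_, ?_⟩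
        · intro ψ hψ
          rcases List.mem_append.1 hψ with h' | h'
          · exact hUG ψ h'
          · simp only [List.mem_singleton] at h'
            subst h'
            exact hLG
        · intro _
          refine ⟨Or.inl (List.mem_append.2 (Or.inr (by simp))), ?_⟩
          intro x ψ heq _
          exact absurd ⟨x, ψ, heq⟩ h2
  · exact ⟨U, fun ψ hψ => hψ, hsep, hUG, fun h => absurd h hLG⟩

def Inv (TU : List Fml × List Fml) : Prop :=
  (∀ φ ∈ TU.1, S.LGood S.P1 φ) ∧ (∀ φ ∈ TU.2, S.LGood S.P2 φ) ∧ ¬S.Sep TU.1 TU.2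

/-- The completion stages. -/
noncomputable def stage (h0 : S.Inv ([S.A0], [S.B0.neg])) : (k : ℕ) → {TU : List Fml × List Fml // S.Inv TU}
  | 0 => ⟨([S.A0], [S.B0.neg]), h0⟩
  | k + 1 =>
    let prev := stage h0 k
    let hT := S.stepT prev.2.2.2 prev.2.1 (enum k)
    let T' := Classical.choose hT
    let hT' : S.TStep prev.1.1 T' prev.1.2 (enum k) := Classical.choose_spec hT
    let hU := S.stepU hT'.2.1 prev.2.2.1 (enum k)
    let U' := Classical.choose hU
    let hU' : S.UStep T' prev.1.2 U' (enum k) := Classical.choose_spec hU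
    ⟨(T', U'), hT'.2.2.1, hU'.2.2.1, hU'.2.1⟩

theorem stage_succ_T (h0 : S.Inv ([S.A0], [S.B0.neg])) (k : ℕ) :
    S.TStep (S.stage h0 k).1.1 (S.stage h0 (k + 1)).1.1 (S.stage h0 k).1.2 (enum k) :=
  Classical.choose_spec (S.stepT (S.stage h0 k).2.2.2 (S.stage h0 k).2.1 (enum k))

theorem stage_succ_U (h0 : S.Inv ([S.A0], [S.B0.neg])) (k : ℕ) :
    S.UStep (S.stage h0 (k + 1)).1.1 (S.stage h0 k).1.2 (S.stage h0 (k + 1)).1.2 (enum k) :=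
  Classical.choose_spec (S.stepU (S.stage_succ_T h0 k).2.1 (S.stage h0 k).2.2.1 (enum k))

theorem stage_mono_T (h0 : S.Inv ([S.A0], [S.B0.neg])) {k l : ℕ} (hkl : k ≤ l) :
    ∀ φ ∈ (S.stage h0 k).1.1, φ ∈ (S.stage h0 l).1.1 := by
  induction l with
  | zero =>
    intro φ
    rw [Nat.le_zero.1 hkl]
    exact fun h => h
  | succ l ih =>
    rcases Nat.lt_or_ge k (l + 1) with h | h
    · intro φ hφ
      exact (S.stage_succ_T h0 l).1 φ (ih (Nat.lt_succ_iff.1 h) φ hφ)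
    · have : k = l + 1 := le_antisymm hkl h
      rw [this]
      exact fun φ h => h

theorem stage_mono_U (h0 : S.Inv ([S.A0], [S.B0.neg])) {k l : ℕ} (hkl : k ≤ l) :
    ∀ φ ∈ (S.stage h0 k).1.2, φ ∈ (S.stage h0 l).1.2 := by
  induction l with
  | zero =>
    intro φ
    rw [Nat.le_zero.1 hkl]
    exact fun h => h
  | succ l ih =>
    rcases Nat.lt_or_ge k (l + 1) with h | h
    · intro φ hφ
      exact (S.stage_succ_U h0 l).1 φ (ih (Nat.lt_succ_iff.1 h) φ hφ)
    · have : k = l + 1 := le_antisymm hkl h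
      rw [this]
      exact fun φ h => h

def TT (h0 : S.Inv ([S.A0], [S.B0.neg])) : Set Fml := {φ | ∃ k, φ ∈ (S.stage h0 k).1.1}
def UU (h0 : S.Inv ([S.A0], [S.B0.neg])) : Set Fml := {φ | ∃ k, φ ∈ (S.stage h0 k).1.2}

variable {S}
variable (h0 : S.Inv ([S.A0], [S.B0.neg]))

theorem TT_good : ∀ φ ∈ S.TT h0, S.LGood S.P1 φ := by
  rintro φ ⟨k, hk⟩
  exact (S.stage h0 k).2.1 φ hk

theorem UU_good : ∀ φ ∈ S.UU h0, S.LGood S.P2 φ := by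
  rintro φ ⟨k, hk⟩
  exact (S.stage h0 k).2.2.1 φ hk

theorem lists_in_stage (LT LU : List Fml) (hT : ∀ φ ∈ LT, φ ∈ S.TT h0)
    (hU : ∀ φ ∈ LU, φ ∈ S.UU h0) :
    ∃ k, (∀ φ ∈ LT, φ ∈ (S.stage h0 k).1.1) ∧ (∀ φ ∈ LU, φ ∈ (S.stage h0 k).1.2) := by
  induction LT with
  | nil =>
    induction LU with
    | nil => exact ⟨0, by simp, by simp⟩
    | cons φ LU ihU =>
      obtain ⟨k1, -, hk1⟩ := ihU (fun ψ hψ => hU ψ (List.mem_cons_of_mem _ hψ))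
      obtain ⟨k2, hk2⟩ := hU φ (List.mem_cons_self)
      refine ⟨max k1 k2, by simp, ?_⟩
      intro ψ hψ
      rcases List.mem_cons.1 hψ with rfl | hψ
      · exact S.stage_mono_U h0 (le_max_right _ _) ψ hk2
      · exact S.stage_mono_U h0 (le_max_left _ _) ψ (hk1 ψ hψ)
  | cons φ LT ihT =>
    obtain ⟨k1, hk1, hk1U⟩ := ihT (fun ψ hψ => hT ψ (List.mem_cons_of_mem _ hψ))
    obtain ⟨k2, hk2⟩ := hT φ (List.mem_cons_self)
    refine ⟨max k1 k2, ?_, ?_⟩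
    · intro ψ hψ
      rcases List.mem_cons.1 hψ with rfl | hψ
      · exact S.stage_mono_T h0 (le_max_right _ _) ψ hk2
      · exact S.stage_mono_T h0 (le_max_left _ _) ψ (hk1 ψ hψ)
    · intro ψ hψ
      exact S.stage_mono_U h0 (le_max_left _ _) ψ (hk1U ψ hψ)

theorem pair_insep (LT LU : List Fml) (hT : ∀ φ ∈ LT, φ ∈ S.TT h0)
    (hU : ∀ φ ∈ LU, φ ∈ S.UU h0) : ¬S.Sep LT LU := by
  intro hsep
  obtain ⟨k, hk1, hk2⟩ := lists_in_stage h0 LT LU hT hU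
  exact (S.stage h0 k).2.2.2 (S.Sep_mono hk1 hk2 hsep)

theorem TT_consistent (L : List Fml) (hL : ∀ φ ∈ L, φ ∈ S.TT h0) :
    ¬entailsL L .fls := by
  intro h
  exact pair_insep h0 L [] hL (by simp) (S.Sep_of_bot h)

theorem UU_consistent (L : List Fml) (hL : ∀ φ ∈ L, φ ∈ S.UU h0) :
    ¬entailsL L .fls := by
  intro h
  exact pair_insep h0 [] L (by simp) hL (S.Sep_of_bot' h)

theorem TT_complete {φ : Fml} (hLG : S.LGood S.P1 φ) : φ ∈ S.TT h0 ∨ φ.neg ∈ S.TT h0 := by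
  obtain ⟨k, hk⟩ := enum_surj φ
  rcases ((S.stage_succ_T h0 k).2.2.2 (by rw [hk]; exact hLG)).1 with h | h
  · exact Or.inl ⟨k + 1, by rw [← hk]; exact h⟩
  · exact Or.inr ⟨k + 1, by rw [← hk]; exact h⟩

theorem UU_complete {φ : Fml} (hLG : S.LGood S.P2 φ) : φ ∈ S.UU h0 ∨ φ.neg ∈ S.UU h0 := by
  obtain ⟨k, hk⟩ := enum_surj φ
  rcases ((S.stage_succ_U h0 k).2.2.2 (by rw [hk]; exact hLG)).1 with h | h
  · exact Or.inl ⟨k + 1, by rw [← hk]; exact h⟩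
  · exact Or.inr ⟨k + 1, by rw [← hk]; exact h⟩

theorem not_both {φ : Fml} (h1 : φ ∈ S.TT h0) (h2 : φ.neg ∈ S.TT h0) : False := by
  refine TT_consistent h0 [φ, φ.neg] ?_ ?_
  · intro ψ hψ
    rcases List.mem_cons.1 hψ with rfl | hψ
    · exact h1
    · rcases List.mem_cons.1 hψ with rfl | hψ
      · exact h2
      · exact absurd hψ (List.not_mem_nil)
  · intro D hD M a ha
    have hs1 := ha φ (by simp)
    have hs2 := ha φ.neg (by simp)
    exact hs2 hs1

theorem not_both' {φ : Fml} (h1 : φ ∈ S.UU h0) (h2 : φ.neg ∈ S.UU h0) : False := by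
  refine UU_consistent h0 [φ, φ.neg] ?_ ?_
  · intro ψ hψ
    rcases List.mem_cons.1 hψ with rfl | hψ
    · exact h1
    · rcases List.mem_cons.1 hψ with rfl | hψ
      · exact h2
      · exact absurd hψ (List.not_mem_nil)
  · intro D hD M a ha
    have hs1 := ha φ (by simp)
    have hs2 := ha φ.neg (by simp)
    exact hs2 hs1

theorem TT_henkin {x : ℕ} {ψ : Fml} (h : Fml.exi x ψ ∈ S.TT h0) :
    ∃ c, S.SOK c 0 ∧ ψ.subst (Function.update Tm.var x (cstC c)) ∈ S.TT h0 := by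
  obtain ⟨k, hk⟩ := enum_surj (Fml.exi x ψ)
  have hLG : S.LGood S.P1 (Fml.exi x ψ) := TT_good h0 _ h
  have hstep := (S.stage_succ_T h0 k).2.2.2 (by rw [hk]; exact hLG)
  rcases hstep.1 with hmem | hmem
  · obtain ⟨c, hc1, hc2⟩ := hstep.2 x ψ hk hmem
    exact ⟨c, hc1, ⟨k + 1, hc2⟩⟩
  · exact (not_both h0 h ⟨k + 1, by rw [hk] at hmem; exact hmem⟩).elim

theorem UU_henkin {x : ℕ} {ψ : Fml} (h : Fml.exi x ψ ∈ S.UU h0) :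
    ∃ c, S.SOK c 0 ∧ ψ.subst (Function.update Tm.var x (cstC c)) ∈ S.UU h0 := by
  obtain ⟨k, hk⟩ := enum_surj (Fml.exi x ψ)
  have hLG : S.LGood S.P2 (Fml.exi x ψ) := UU_good h0 _ h
  have hstep := (S.stage_succ_U h0 k).2.2.2 (by rw [hk]; exact hLG)
  rcases hstep.1 with hmem | hmem
  · obtain ⟨c, hc1, hc2⟩ := hstep.2 x ψ hk hmem
    exact ⟨c, hc1, ⟨k + 1, hc2⟩⟩
  · exact (not_both' h0 h ⟨k + 1, by rw [hk] at hmem; exact hmem⟩).elim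

end Setup

/-! ### Term model and truth lemma -/

theorem GI_single (x : ℕ) {t : Tm} (ht : t.vars = ∅) : GI (Function.update Tm.var x t) := by
  intro v
  rcases eq_or_ne v x with rfl | hne
  · exact Or.inr (by simp [ht])
  · simp [Function.update_of_ne hne]

theorem upd_eval {D : Type} {M : Struc D} {a : ℕ → D} (x : ℕ) (t : Tm) :
    (fun v => ((Function.update Tm.var x t) v).eval M a) = Function.update a x (t.eval M a) := by
  funext v
  rcases eq_or_ne v x with rfl | hne
  · simp
  · simp [Function.update_of_ne hne, Tm.eval]

namespace Setup

variable (S : Setup)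

def Dom : Type := {t : Tm // t.vars = ∅ ∧ ∀ f n, (f, n) ∈ t.funs → S.SOK f n}

noncomputable def t0 : S.Dom :=
  ⟨cstC 0, cstC_vars 0, by
    rw [cstC_funs]
    intro f n hf
    simp only [Set.mem_singleton_iff, Prod.mk.injEq] at hf
    obtain ⟨rfl, rfl⟩ := hf
    intro v hv he
    have h1 := congrArg Prod.fst he
    have h2 := S.hN1
    simp only at h1
    omega⟩

/-- A maximal consistent Henkin-complete set over predicate symbols `P`. -/
structure MCS (S : Setup) where
  W : Set Fml
  P : Set ℕ
  good : ∀ φ ∈ W, S.LGood P φ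
  consistent : ∀ L : List Fml, (∀ φ ∈ L, φ ∈ W) → ¬entailsL L .fls
  complete : ∀ φ, S.LGood P φ → φ ∈ W ∨ φ.neg ∈ W
  henkin : ∀ x ψ, Fml.exi x ψ ∈ W →
    ∃ c, S.SOK c 0 ∧ ψ.subst (Function.update Tm.var x (cstC c)) ∈ W

variable {S}

/-- Interpretation of function symbols in the canonical term structure. -/
noncomputable def mkFn : (f n : ℕ) → (Fin n → S.Dom) → S.Dom := fun f n ds =>
  if h : S.SOK f n then
    ⟨.app f n (fun i => (ds i).1), by
      simp only [Tm.vars, Set.iUnion_eq_empty]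
      exact fun i => (ds i).2.1, by
      intro g m hg
      rcases Set.mem_insert_iff.1 hg with he | hg'
      · rw [Prod.mk.injEq] at he
        obtain ⟨rfl, rfl⟩ := he
        exact h
      · simp only [Set.mem_iUnion] at hg'
        obtain ⟨i, hi⟩ := hg'
        exact (ds i).2.2 g m hi⟩
  else S.t0

theorem mkFn_val (f n : ℕ) (ds : Fin n → S.Dom) (h : S.SOK f n) :
    (mkFn f n ds).1 = Tm.app f n (fun i => (ds i).1) := by
  simp only [mkFn]
  exact congrArg Subtype.val (dif_pos h)

namespace MCS

/-- The canonical term structure of `C`. -/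
noncomputable def M (C : MCS S) : Struc S.Dom where
  fn := mkFn
  pr r n ds := Fml.atom r n (fun i => (ds i).1) ∈ C.W

variable (C : MCS S)


theorem eval_id : ∀ (t : Tm) (h1 : t.vars = ∅) (h2 : ∀ f n, (f, n) ∈ t.funs → S.SOK f n)
    (a : ℕ → S.Dom), Tm.eval C.M a t = ⟨t, h1, h2⟩ := by
  intro t
  induction t with
  | var x =>
    intro h1 h2 a
    exfalso
    have : x ∈ Tm.vars (Tm.var x) := by simp [Tm.vars]
    rw [h1] at this
    exact this
  | app f n ts ih =>
    intro h1 h2 a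
    have hok : S.SOK f n := h2 f n (by simp [Tm.funs])
    have hv : ∀ i, (ts i).vars = ∅ := by
      have := h1
      simp only [Tm.vars, Set.iUnion_eq_empty] at this
      exact this
    have hf : ∀ i, ∀ g m, (g, m) ∈ (ts i).funs → S.SOK g m := by
      intro i g m hg
      refine h2 g m ?_
      simp only [Tm.funs]
      exact Set.mem_insert_iff.2 (Or.inr (Set.mem_iUnion.2 ⟨i, hg⟩))
    refine Subtype.ext ?_
    show (mkFn f n (fun i => Tm.eval C.M a (ts i))).1 = Tm.app f n ts
    rw [mkFn_val _ _ _ hok]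
    congr 1
    funext i
    rw [ih i (hv i) (hf i) a]

theorem mem_not_both {φ : Fml} (h1 : φ ∈ C.W) (h2 : φ.neg ∈ C.W) : False := by
  refine C.consistent [φ, φ.neg] ?_ ?_
  · intro ψ hψ
    rcases List.mem_cons.1 hψ with rfl | hψ
    · exact h1
    · rcases List.mem_cons.1 hψ with rfl | hψ
      · exact h2
      · exact absurd hψ (List.not_mem_nil)
  · intro D hD M a ha
    exact ha φ.neg (by simp) (ha φ (by simp))

theorem mem_of_ent {L : List Fml} {ψ : Fml} (hL : ∀ φ ∈ L, φ ∈ C.W)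
    (hg : S.LGood C.P ψ) (he : entailsL (ψ.neg :: L) .fls) : ψ ∈ C.W := by
  rcases C.complete ψ hg with h | h
  · exact h
  · exfalso
    refine C.consistent (ψ.neg :: L) ?_ he
    intro φ hφ
    rcases List.mem_cons.1 hφ with rfl | hφ
    · exact h
    · exact hL φ hφ

theorem truth : ∀ (m : ℕ) (θ : Fml), θ.size < m → S.LGood C.P θ →
    (θ ∈ C.W → θ.sat C.M (fun _ => S.t0)) ∧
    (θ.neg ∈ C.W → ¬θ.sat C.M (fun _ => S.t0)) := by
  intro m
  induction m with
  | zero => intro θ hsz _; exact absurd hsz (Nat.not_lt_zero _)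
  | succ m ih =>
    intro θ hsz hg
    cases θ with
    | tru =>
      refine ⟨fun _ => trivial, fun h _ => ?_⟩
      refine C.consistent [Fml.tru.neg] (by simpa using h) ?_
      intro D hD M a ha
      exact ha Fml.tru.neg (by simp) trivial
    | fls =>
      refine ⟨fun h => ?_, fun _ hs => hs⟩
      exact (C.consistent [Fml.fls] (by simpa using h)
        (fun D hD M a ha => ha Fml.fls (by simp))).elim
    | atom r n ts =>
      have hv : ∀ i, (ts i).vars = ∅ := by
        have := hg.1
        simp only [Fml.free, Set.iUnion_eq_empty] at this
        exact this
      have hfu : ∀ i, ∀ g m, (g, m) ∈ (ts i).funs → S.SOK g m := by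
        intro i g m hgm
        exact hg.2.2 g m (by simp only [Fml.funs]; exact Set.mem_iUnion.2 ⟨i, hgm⟩)
      have hsat_iff : (Fml.atom r n ts).sat C.M (fun _ => S.t0) ↔ Fml.atom r n ts ∈ C.W := by
        show (Fml.atom r n (fun i => (Tm.eval C.M (fun _ => S.t0) (ts i)).1) ∈ C.W) ↔ _
        have he : (fun i => (Tm.eval C.M (fun _ => S.t0) (ts i)).1) = ts := by
          funext i
          rw [C.eval_id (ts i) (hv i) (hfu i)]
        rw [he]
      refine ⟨fun h => hsat_iff.2 h, fun h hs => ?_⟩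
      exact C.mem_not_both (hsat_iff.1 hs) h
    | neg F =>
      have hszF : F.size < m := by simp [Fml.size] at hsz; omega
      refine ⟨fun h => (ih F hszF hg).2 h, fun h hs => ?_⟩
      have hF : F ∈ C.W := by
        refine C.mem_of_ent (L := [F.neg.neg]) (by simpa using h) hg ?_
        intro D hD M a ha
        exact ha F.neg.neg (by simp) (ha F.neg (by simp))
      exact hs ((ih F hszF hg).1 hF)
    | conj F G =>
      have hszF : F.size < m := by simp [Fml.size] at hsz; omega
      have hszG : G.size < m := by simp [Fml.size] at hsz; omega
      have hgF : S.LGood C.P F := by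
        obtain ⟨h1, h2, h3⟩ := hg
        rw [show (Fml.conj F G).free = F.free ∪ G.free from rfl, Set.union_empty_iff] at h1
        exact ⟨h1.1, fun r hr => h2 (Or.inl hr), fun f n hf => h3 f n (Or.inl hf)⟩
      have hgG : S.LGood C.P G := by
        obtain ⟨h1, h2, h3⟩ := hg
        rw [show (Fml.conj F G).free = F.free ∪ G.free from rfl, Set.union_empty_iff] at h1
        exact ⟨h1.2, fun r hr => h2 (Or.inr hr), fun f n hf => h3 f n (Or.inr hf)⟩
      constructor
      · intro h
        have hF : F ∈ C.W := by
          refine C.mem_of_ent (L := [Fml.conj F G]) (by simpa using h) hgF ?_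
          intro D hD M a ha
          exact ha F.neg (by simp) (ha (Fml.conj F G) (by simp)).1
        have hG : G ∈ C.W := by
          refine C.mem_of_ent (L := [Fml.conj F G]) (by simpa using h) hgG ?_
          intro D hD M a ha
          exact ha G.neg (by simp) (ha (Fml.conj F G) (by simp)).2
        exact ⟨(ih F hszF hgF).1 hF, (ih G hszG hgG).1 hG⟩
      · intro h hs
        rcases C.complete F hgF with hF | hF
        · rcases C.complete G hgG with hG | hG
          · refine C.consistent [F, G, (Fml.conj F G).neg] ?_ ?_
            · intro ψ hψ
              rcases List.mem_cons.1 hψ with rfl | hψ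
              · exact hF
              rcases List.mem_cons.1 hψ with rfl | hψ
              · exact hG
              rcases List.mem_cons.1 hψ with rfl | hψ
              · exact h
              · exact absurd hψ (List.not_mem_nil)
            · intro D hD M a ha
              exact ha (Fml.conj F G).neg (by simp) ⟨ha F (by simp), ha G (by simp)⟩
          · exact (ih G hszG hgG).2 hG hs.2
        · exact (ih F hszF hgF).2 hF hs.1
    | disj F G =>
      have hszF : F.size < m := by simp [Fml.size] at hsz; omega
      have hszG : G.size < m := by simp [Fml.size] at hsz; omega
      have hgF : S.LGood C.P F := by
        obtain ⟨h1, h2, h3⟩ := hg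
        rw [show (Fml.disj F G).free = F.free ∪ G.free from rfl, Set.union_empty_iff] at h1
        exact ⟨h1.1, fun r hr => h2 (Or.inl hr), fun f n hf => h3 f n (Or.inl hf)⟩
      have hgG : S.LGood C.P G := by
        obtain ⟨h1, h2, h3⟩ := hg
        rw [show (Fml.disj F G).free = F.free ∪ G.free from rfl, Set.union_empty_iff] at h1
        exact ⟨h1.2, fun r hr => h2 (Or.inr hr), fun f n hf => h3 f n (Or.inr hf)⟩
      constructor
      · intro h
        rcases C.complete F hgF with hF | hF
        · exact Or.inl ((ih F hszF hgF).1 hF)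
        · have hG : G ∈ C.W := by
            refine C.mem_of_ent (L := [Fml.disj F G, F.neg]) ?_ hgG ?_
            · intro ψ hψ
              rcases List.mem_cons.1 hψ with rfl | hψ
              · exact h
              rcases List.mem_cons.1 hψ with rfl | hψ
              · exact hF
              · exact absurd hψ (List.not_mem_nil)
            · intro D hD M a ha
              rcases ha (Fml.disj F G) (by simp) with h' | h'
              · exact ha F.neg (by simp) h'
              · exact ha G.neg (by simp) h'
          exact Or.inr ((ih G hszG hgG).1 hG)
      · intro h hs
        have hFn : F.neg ∈ C.W := by
          refine C.mem_of_ent (L := [(Fml.disj F G).neg]) (by simpa using h) hgF ?_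
          intro D hD M a ha
          exact ha F.neg.neg (by simp) fun hF => ha (Fml.disj F G).neg (by simp) (Or.inl hF)
        have hGn : G.neg ∈ C.W := by
          refine C.mem_of_ent (L := [(Fml.disj F G).neg]) (by simpa using h) hgG ?_
          intro D hD M a ha
          exact ha G.neg.neg (by simp) fun hG => ha (Fml.disj F G).neg (by simp) (Or.inr hG)
        rcases hs with hF | hG
        · exact (ih F hszF hgF).2 hFn hF
        · exact (ih G hszG hgG).2 hGn hG
    | all x F =>
      have hszF : F.size < m := by simp [Fml.size] at hsz; omega
      have hfree : F.free ⊆ {x} := by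
        intro v hv
        by_contra hne
        have : v ∈ (Fml.all x F).free := ⟨hv, hne⟩
        rw [hg.1] at this
        exact this
      constructor
      · intro h
        intro d
        obtain ⟨t, ht1, ht2⟩ := d
        have hginst : S.LGood C.P (F.subst (Function.update Tm.var x t)) :=
          S.LGood_subst_single hfree hg.2.1 hg.2.2 ht1 ht2
        have hszinst : (F.subst (Function.update Tm.var x t)).size < m := by
          rw [F.size_subst]; exact hszF
        have hmem : F.subst (Function.update Tm.var x t) ∈ C.W := by
          refine C.mem_of_ent (L := [Fml.all x F]) (by simpa using h) hginst ?_
          intro D hD M a ha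
          have h2 : ∀ d', F.sat M (Function.update a x d') := ha (Fml.all x F) (by simp)
          refine ha (F.subst (Function.update Tm.var x t)).neg (by simp) ?_
          rw [Fml.sat_subst _ _ _ (GI_single x ht1), upd_eval]
          exact h2 _
        have := (ih _ hszinst hginst).1 hmem
        rw [Fml.sat_subst _ _ _ (GI_single x ht1), upd_eval,
          C.eval_id t ht1 ht2] at this
        exact this
      · intro h hs
        have hexi : Fml.exi x F.neg ∈ C.W := by
          refine C.mem_of_ent (L := [(Fml.all x F).neg]) (by simpa using h) hg ?_
          intro D hD M a ha
          have h1 : ¬∃ d, ¬F.sat M (Function.update a x d) := ha (Fml.exi x F.neg).neg (by simp)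
          have h2 : ¬∀ d, F.sat M (Function.update a x d) := ha (Fml.all x F).neg (by simp)
          apply h2
          intro d
          by_contra hcon
          exact h1 ⟨d, hcon⟩
        obtain ⟨c, hcS, hinst⟩ := C.henkin x F.neg hexi
        have hginst : S.LGood C.P (F.subst (Function.update Tm.var x (cstC c))) :=
          C.good ((F.subst (Function.update Tm.var x (cstC c))).neg)
            (show _ ∈ C.W from hinst)
        have hszinst : (F.subst (Function.update Tm.var x (cstC c))).size < m := by
          rw [F.size_subst]; exact hszF
        have := (ih _ hszinst hginst).2 hinst
        rw [Fml.sat_subst _ _ _ (GI_single x (cstC_vars c)), upd_eval] at this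
        exact this (hs _)
    | exi x F =>
      have hszF : F.size < m := by simp [Fml.size] at hsz; omega
      have hfree : F.free ⊆ {x} := by
        intro v hv
        by_contra hne
        have : v ∈ (Fml.exi x F).free := ⟨hv, hne⟩
        rw [hg.1] at this
        exact this
      constructor
      · intro h
        obtain ⟨c, hcS, hinst⟩ := C.henkin x F h
        have hginst : S.LGood C.P (F.subst (Function.update Tm.var x (cstC c))) :=
          C.good _ hinst
        have hszinst : (F.subst (Function.update Tm.var x (cstC c))).size < m := by
          rw [F.size_subst]; exact hszF
        have := (ih _ hszinst hginst).1 hinst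
        rw [Fml.sat_subst _ _ _ (GI_single x (cstC_vars c)), upd_eval] at this
        exact ⟨_, this⟩
      · intro h hs
        obtain ⟨⟨t, ht1, ht2⟩, hd⟩ := hs
        have hginst : S.LGood C.P (F.subst (Function.update Tm.var x t)) :=
          S.LGood_subst_single hfree hg.2.1 hg.2.2 ht1 ht2
        have hszinst : (F.subst (Function.update Tm.var x t)).size < m := by
          rw [F.size_subst]; exact hszF
        have hmem : (F.subst (Function.update Tm.var x t)).neg ∈ C.W := by
          refine C.mem_of_ent (L := [(Fml.exi x F).neg]) (by simpa using h) hginst ?_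
          intro D hD M a ha
          have h1 := ha (F.subst (Function.update Tm.var x t)).neg.neg (by simp)
          have h2 : ¬∃ d, F.sat M (Function.update a x d) := ha (Fml.exi x F).neg (by simp)
          refine h1 (fun hin => ?_)
          rw [Fml.sat_subst _ _ _ (GI_single x ht1), upd_eval] at hin
          exact h2 ⟨_, hin⟩
        have := (ih _ hszinst hginst).2 hmem
        rw [Fml.sat_subst _ _ _ (GI_single x ht1), upd_eval, C.eval_id t ht1 ht2] at this
        exact this hd

end MCS

end Setup

/-! ### The countermodel from an inseparable pair -/

namespace Setup

variable {S : Setup}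

theorem countermodel (h0' : ¬S.Sep [S.A0] [S.B0.neg]) :
    ∃ (D : Type) (_ : Nonempty D) (M : Struc D) (a : ℕ → D), S.A.sat M a ∧ ¬S.B.sat M a := by
  have h0 : S.Inv ([S.A0], [S.B0.neg]) := by
    refine ⟨?_, ?_, h0'⟩
    · intro φ hφ
      rcases List.mem_cons.1 hφ with rfl | hφ
      · exact S.LGood_A0
      · exact absurd hφ (List.not_mem_nil)
    · intro φ hφ
      rcases List.mem_cons.1 hφ with rfl | hφ
      · exact S.LGood_B0neg
      · exact absurd hφ (List.not_mem_nil)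
  let CT : MCS S := ⟨S.TT h0, S.P1, TT_good h0, TT_consistent h0,
    fun φ h => TT_complete h0 h, fun x ψ h => TT_henkin h0 h⟩
  let CU : MCS S := ⟨S.UU h0, S.P2, UU_good h0, UU_consistent h0,
    fun φ h => UU_complete h0 h, fun x ψ h => UU_henkin h0 h⟩
  -- agreement on shared atoms over the term domain
  have atom_agree : ∀ (r n : ℕ) (ds : Fin n → S.Dom), r ∈ S.P1 → r ∈ S.P2 →
      ((Fml.atom r n (fun i => (ds i).1)) ∈ S.TT h0 ↔
       (Fml.atom r n (fun i => (ds i).1)) ∈ S.UU h0) := by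
    intro r n ds hr1 hr2
    have hgood1 : S.LGood S.P1 (Fml.atom r n (fun i => (ds i).1)) := by
      refine ⟨?_, ?_, ?_⟩
      · show (⋃ i, ((ds i).1).vars) = ∅
        simp only [Set.iUnion_eq_empty]
        exact fun i => (ds i).2.1
      · intro s hs
        simp only [Fml.predSyms, Set.mem_singleton_iff] at hs
        subst hs; exact hr1
      · intro f m hf
        simp only [Fml.funs, Set.mem_iUnion] at hf
        obtain ⟨i, hi⟩ := hf
        exact (ds i).2.2 f m hi
    have hgood2 : S.LGood S.P2 (Fml.atom r n (fun i => (ds i).1)) :=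
      ⟨hgood1.1, by
        intro s hs
        simp only [Fml.predSyms, Set.mem_singleton_iff] at hs
        subst hs; exact hr2, hgood1.2.2⟩
    have hgsep : S.GoodSep (Fml.atom r n (fun i => (ds i).1)) :=
      ⟨⟨hgood1.1, fun s hs => ⟨hgood1.2.1 hs, hgood2.2.1 hs⟩, hgood1.2.2⟩,
        by simp [Fml.bound]⟩
    constructor
    · intro hT
      rcases UU_complete h0 hgood2 with h | h
      · exact h
      · exfalso
        refine pair_insep h0 [Fml.atom r n (fun i => (ds i).1)]
          [(Fml.atom r n (fun i => (ds i).1)).neg] ?_ ?_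
            ⟨Fml.atom r n (fun i => (ds i).1), hgsep, ?_, ?_⟩
        · intro ψ hψ
          rcases List.mem_cons.1 hψ with rfl | hψ
          · exact hT
          · exact absurd hψ (List.not_mem_nil)
        · intro ψ hψ
          rcases List.mem_cons.1 hψ with rfl | hψ
          · exact h
          · exact absurd hψ (List.not_mem_nil)
        · exact fun D hD M a ha => ha _ (by simp)
        · exact fun D hD M a ha => ha _ (by simp)
    · intro hU
      rcases TT_complete h0 hgood1 with h | h
      · exact h
      · exfalso
        refine pair_insep h0 [(Fml.atom r n (fun i => (ds i).1)).neg]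
          [Fml.atom r n (fun i => (ds i).1)] ?_ ?_
            ⟨(Fml.atom r n (fun i => (ds i).1)).neg, ?_, ?_, ?_⟩
        · intro ψ hψ
          rcases List.mem_cons.1 hψ with rfl | hψ
          · exact h
          · exact absurd hψ (List.not_mem_nil)
        · intro ψ hψ
          rcases List.mem_cons.1 hψ with rfl | hψ
          · exact hU
          · exact absurd hψ (List.not_mem_nil)
        · exact ⟨hgsep.1, hgsep.2⟩
        · exact fun D hD M a ha => ha _ (by simp)
        · intro D hD M a ha
          exact fun hn => hn (ha _ (by simp))
  -- the merged structure
  let M3 : Struc S.Dom :=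
    ⟨mkFn, fun r n ds => if r ∈ S.P1 then Fml.atom r n (fun i => (ds i).1) ∈ S.TT h0
      else Fml.atom r n (fun i => (ds i).1) ∈ S.UU h0⟩
  have hA0mem : S.A0 ∈ S.TT h0 := ⟨0, by exact List.mem_singleton_self _⟩
  have hB0mem : S.B0.neg ∈ S.UU h0 := ⟨0, by exact List.mem_singleton_self _⟩
  have hsatA0 : S.A0.sat CT.M (fun _ => S.t0) :=
    (CT.truth (S.A0.size + 1) S.A0 (Nat.lt_succ_self _) S.LGood_A0).1 hA0mem
  have hsatB0n : ¬S.B0.sat CU.M (fun _ => S.t0) :=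
    (CU.truth (S.B0.size + 1) S.B0 (by simp [Fml.size]) S.LGood_B0neg).2 hB0mem
  -- transfer to M3
  have hsatA0' : S.A0.sat M3 (fun _ => S.t0) := by
    refine (Fml.sat_congr (M := CT.M) (M' := M3) S.A0 _ _ (fun f n _ => rfl)
      (fun r hr n => ?_) (fun _ _ => rfl)).1 hsatA0
    funext ds
    exact (if_pos (S.LGood_A0.2.1 hr)).symm
  have hsatB0n' : ¬S.B0.sat M3 (fun _ => S.t0) := by
    intro hs
    apply hsatB0n
    refine (Fml.sat_congr (M := M3) (M' := CU.M) S.B0 _ _ (fun f n _ => rfl)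
      (fun r hr n => ?_) (fun _ _ => rfl)).1 hs
    have hr2 : r ∈ S.P2 := S.LGood_B0neg.2.1 hr
    funext ds
    by_cases hr1 : r ∈ S.P1
    · exact (if_pos hr1).trans (propext (atom_agree r n ds hr1 hr2))
    · exact if_neg hr1
  -- undo the grounding substitution
  refine ⟨S.Dom, ⟨S.t0⟩, M3, fun v => (S.σ0 v).eval M3 (fun _ => S.t0), ?_, ?_⟩
  · exact (Fml.sat_subst S.A S.σ0 _ (GI_σ0 S)).1 hsatA0'
  · intro hs
    exact hsatB0n' ((Fml.sat_subst S.B S.σ0 _ (GI_σ0 S)).2 hs)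

end Setup

/-! ### The interpolation theorem -/

namespace Setup

variable {S : Setup}

theorem sep_of_entails (hent : entails S.A S.B) :
    S.Sep [S.A0] [S.B0.neg] := by
  by_contra h
  obtain ⟨D, hD, M, a, hA, hB⟩ := countermodel h
  exact hB (hent D hD M a hA)

theorem interpolant (hent : entails S.A S.B) :
    ∃ H : Fml, entails S.A H ∧ entails H S.B ∧ H.predSyms ⊆ S.P1 ∩ S.P2 := by
  obtain ⟨θ, hg, he, hu⟩ := sep_of_entails hent
  have harith : ∀ v : ℕ, (S.N + 2 * v - S.N) / 2 = v := by
    intro v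
    rw [Nat.add_sub_cancel_left, Nat.mul_div_cancel_left v (by norm_num)]
  -- capture condition for un-abstraction
  have hb : ∀ f, (∃ v, f = S.N + 2 * v) → (f, 0) ∈ θ.funs →
      ((f - S.N) / 2) ∉ θ.bound := by
    rintro f ⟨v, rfl⟩ hf hbd
    have hvK : v < S.K := by
      by_contra hge
      exact hg.1.2.2 _ _ hf v (Nat.le_of_not_lt hge) rfl
    have := hg.2 _ hbd
    rw [harith v] at this
    omega
  -- key satisfaction transfers
  have key : ∀ (D : Type), Nonempty D → ∀ (M : Struc D) (a : ℕ → D),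
      ∀ G : Fml, (∀ f n, (f, n) ∈ G.funs → f < S.N) →
      ((G.subst S.σ0).sat (McD M (fun f => ∃ v, f = S.N + 2 * v)
        (fun f => a ((f - S.N) / 2))) a ↔ G.sat M a) := by
    intro D hD M a G hGf
    rw [Fml.sat_subst G S.σ0 a (GI_σ0 S)]
    have hev : (fun v => (S.σ0 v).eval (McD M (fun f => ∃ v, f = S.N + 2 * v)
        (fun f => a ((f - S.N) / 2))) a) = a := by
      funext v
      show (McD M _ _).fn (S.N + 2 * v) 0 _ = a v
      show (if (0 : ℕ) = 0 ∧ (∃ u, S.N + 2 * v = S.N + 2 * u) then _ else _) = a v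
      rw [if_pos ⟨rfl, v, rfl⟩, harith v]
    rw [hev]
    refine Fml.sat_congr G a a (fun f n hf => ?_) (fun _ _ _ => rfl) (fun _ _ => rfl)
    funext ds
    show (if n = 0 ∧ (∃ u, f = S.N + 2 * u) then _ else M.fn f n ds) = M.fn f n ds
    rw [if_neg]
    rintro ⟨rfl, u, rfl⟩
    have := hGf _ _ hf
    omega
  refine ⟨θ.repc (fun f => ∃ v, f = S.N + 2 * v) (fun f => (f - S.N) / 2), ?_, ?_, ?_⟩
  · intro D hD M a hA
    rw [Fml.sat_repc θ a hb]
    refine he D hD _ a ?_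
    intro φ hφ
    rcases List.mem_cons.1 hφ with rfl | hφ
    · exact (key D hD M a S.A (fun f n hf => S.hNfun f n (Or.inl hf))).2 hA
    · exact absurd hφ (List.not_mem_nil)
  · intro D hD M a hH
    rw [Fml.sat_repc θ a hb] at hH
    by_contra hB
    refine hu D hD (McD M (fun f => ∃ v, f = S.N + 2 * v) (fun f => a ((f - S.N) / 2))) a
      ?_ hH
    intro φ hφ
    rcases List.mem_cons.1 hφ with rfl | hφ
    · intro hc
      exact hB ((key D hD M a S.B (fun f n hf => S.hNfun f n (Or.inr hf))).1 hc)
    · exact absurd hφ (List.not_mem_nil)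
  · rw [Fml.predSyms_repc]
    exact hg.1.2.1

end Setup

/-! ### Definientia via interpolation -/

theorem core_definiens (F : Fml) (p x p' : ℕ) (hx : x ∉ F.free) (hfresh : p' ∉ F.predSyms)
    (hpp' : p' ≠ p) (H : Fml)
    (h1 : entails (.conj F (atom1 p x)) H)
    (h2 : entails H (.neg (.conj (F.renamePred p p') (.neg (atom1 p' x)))))
    (hp : p ∉ H.predSyms) (hp' : p' ∉ H.predSyms) :
    isDefiniens F p x H := by
  refine ⟨?_, hp⟩
  intro D hD M a hF
  intro d
  set a' := Function.update a x d with ha'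
  have hax : a' x = d := Function.update_self x d a
  have harg : (fun _ : Fin 1 => a' x) = (fun _ : Fin 1 => d) := funext fun _ => hax
  have hFa' : F.sat M a' := by
    refine (Fml.sat_congr F a a' (fun _ _ _ => rfl) (fun _ _ _ => rfl) ?_).1 hF
    intro v hv
    rw [ha', Function.update_of_ne (show v ≠ x from fun he => hx (he ▸ hv))]
  have hAx : (atom1 p x).sat M a' ↔ M.pr p 1 (fun _ => d) := by
    show M.pr p 1 (fun _ => a' x) ↔ _
    rw [harg]
  have fwd : M.pr p 1 (fun _ => d) → H.sat M a' := by
    intro hpd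
    refine h1 D hD M a' ⟨hFa', ?_⟩
    exact hAx.2 hpd
  have bwd : H.sat M a' → M.pr p 1 (fun _ => d) := by
    intro hH
    set M'' : Struc D := ⟨M.fn, fun r k => if r = p' then M.pr p k else M.pr r k⟩ with hM''
    have hHM'' : H.sat M'' a' := by
      refine (Fml.sat_congr (M := M) (M' := M'') H a' a' (fun _ _ _ => rfl)
        (fun r hr k => ?_) (fun _ _ => rfl)).1 hH
      exact (if_neg (show r ≠ p' from fun he => hp' (he ▸ hr))).symm
    have hcons := h2 D hD M'' a' hHM''
    have hF' : (F.renamePred p p').sat M'' a' := by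
      rw [sat_renamePred]
      refine (Fml.sat_congr (M := M) (M' := prSwap M'' p p') F a' a' (fun _ _ _ => rfl)
        (fun r hr k => ?_) (fun _ _ => rfl)).1 hFa'
      show M.pr r k = if r = p then M''.pr p' k else M''.pr r k
      by_cases hrp : r = p
      · rw [if_pos hrp]
        have h2' : M''.pr p' k = M.pr p k := if_pos rfl
        rw [h2', hrp]
      · rw [if_neg hrp]
        have hrp' : r ≠ p' := fun he => hfresh (he ▸ hr)
        have h2' : M''.pr r k = M.pr r k := if_neg hrp'
        rw [h2']
    have hnn : ¬¬((atom1 p' x).sat M'' a') := fun hn => hcons ⟨hF', hn⟩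
    have hsat : (atom1 p' x).sat M'' a' := Classical.not_not.1 hnn
    have hsat' : M''.pr p' 1 (fun _ => a' x) := hsat
    have hpr : M''.pr p' 1 = M.pr p 1 := if_pos rfl
    rw [hpr, harg] at hsat'
    exact hsat'
  have c1 : ¬(atom1 p x).sat M a' ∨ H.sat M a' := by
    by_cases hpd : M.pr p 1 (fun _ => d)
    · exact Or.inr (fwd hpd)
    · exact Or.inl (fun hA => hpd (hAx.1 hA))
  have c2 : ¬H.sat M a' ∨ (atom1 p x).sat M a' := by
    by_cases hpd : M.pr p 1 (fun _ => d)
    · exact Or.inr (hAx.2 hpd)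
    · exact Or.inl (fun hH => hpd (bwd hH))
  exact ⟨c1, c2⟩

theorem definiens_to_entails (F : Fml) (p x p' : ℕ) (hx : x ∉ F.free)
    (hfresh : p' ∉ F.predSyms) (H : Fml) (hd : isDefiniens F p x H) :
    entails (.conj F (atom1 p x)) (.neg (.conj (F.renamePred p p') (.neg (atom1 p' x)))) := by
  intro D hD M a hA
  obtain ⟨hF, hpx⟩ := hA
  intro hc
  obtain ⟨hF', hnp'⟩ := hc
  have hiff := hd.1 D hD M a hF (a x)
  rw [Function.update_eq_self] at hiff
  obtain ⟨c1, c2⟩ := hiff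
  have hH : H.sat M a := by
    rcases c1 with h | h
    · exact absurd hpx h
    · exact h
  have hFsw : F.sat (prSwap M p p') a := (sat_renamePred p p' F a).1 hF'
  have hiff2 := hd.1 D hD (prSwap M p p') a hFsw (a x)
  rw [Function.update_eq_self] at hiff2
  obtain ⟨c1', c2'⟩ := hiff2
  have hHsw : H.sat (prSwap M p p') a := by
    refine (Fml.sat_congr (M := M) (M' := prSwap M p p') H a a (fun _ _ _ => rfl)
      (fun r hr k => ?_) (fun _ _ => rfl)).1 hH
    show M.pr r k = if r = p then M.pr p' k else M.pr r k
    rw [if_neg (show r ≠ p from fun he => hd.2 (he ▸ hr))]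
  have hpx' : (atom1 p x).sat (prSwap M p p') a := by
    rcases c2' with h | h
    · exact absurd hHsw h
    · exact h
  apply hnp'
  show M.pr p' 1 (fun _ => a x)
  have hpx'' : (prSwap M p p').pr p 1 (fun _ => a x) := hpx'
  have hpr : (prSwap M p p').pr p 1 = M.pr p' 1 := if_pos rfl
  rw [hpr] at hpx''
  exact hpx''

theorem p_notin_right {F : Fml} {p x p' : ℕ} (hpp' : p' ≠ p)
    (h : p ∈ (Fml.neg (.conj (F.renamePred p p') (.neg (atom1 p' x)))).predSyms) : False := by
  rcases h with h | h
  · rcases Set.mem_insert_iff.1 (predSyms_renamePred p p' F h) with h' | h'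
    · exact hpp' h'.symm
    · exact h'.2 rfl
  · simp only [atom1, Fml.predSyms, Set.mem_singleton_iff] at h
    exact hpp' h.symm

theorem p'_notin_left {F : Fml} {p x p' : ℕ} (hfresh : p' ∉ F.predSyms) (hpp' : p' ≠ p)
    (h : p' ∈ (Fml.conj F (atom1 p x)).predSyms) : False := by
  rcases h with h | h
  · exact hfresh h
  · simp only [atom1, Fml.predSyms, Set.mem_singleton_iff] at h
    exact hpp' h


/-- Definientia via Craig interpolation. Let `p'` be a fresh unary
predicate and `F'` be `F` with `p` replaced by `p'`, where `x` does not occur free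
in `F`. Then (a) every Craig interpolant of F ∧ p(x) and ¬(F' ∧ ¬p'(x)) is a
definiens of `p` within `F`, and (b) a definiens of `p` within `F` exists iff
F ∧ p(x) ⊨ ¬(F' ∧ ¬p'(x)). -/
theorem statement17 (F : Fml) (p x p' : ℕ)
    (hx : x ∉ F.free) (hfresh : p' ∉ F.predSyms) (hpp' : p' ≠ p) :
    (∀ H : Fml,
      CraigInterp (.conj F (atom1 p x))
        (.neg (.conj (F.renamePred p p') (.neg (atom1 p' x)))) H →
      isDefiniens F p x H) ∧
    ((∃ H : Fml, isDefiniens F p x H) ↔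
      entails (.conj F (atom1 p x))
        (.neg (.conj (F.renamePred p p') (.neg (atom1 p' x))))) := by
  constructor
  · rintro H ⟨e1, e2, hpred, -, -⟩
    have hp : p ∉ H.predSyms := fun hmem => p_notin_right hpp' (hpred hmem).2
    have hp' : p' ∉ H.predSyms := fun hmem => p'_notin_left hfresh hpp' (hpred hmem).1
    exact core_definiens F p x p' hx hfresh hpp' H e1 e2 hp hp'
  · constructor
    · rintro ⟨H, hd⟩
      exact definiens_to_entails F p x p' hx hfresh H hd
    · intro hent
      obtain ⟨S, hSA, hSB⟩ := setup_exists (.conj F (atom1 p x))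
        (.neg (.conj (F.renamePred p p') (.neg (atom1 p' x))))
      have hent' : entails S.A S.B := by rw [hSA, hSB]; exact hent
      obtain ⟨H, e1, e2, hpred⟩ := Setup.interpolant hent'
      rw [hSA] at e1
      rw [hSB] at e2
      have hpred' : H.predSyms ⊆ (Fml.conj F (atom1 p x)).predSyms ∩
          (Fml.neg (.conj (F.renamePred p p') (.neg (atom1 p' x)))).predSyms := by
        simp only [Setup.P1, Setup.P2, hSA, hSB] at hpred
        exact hpred
      have hp : p ∉ H.predSyms := fun hmem => p_notin_right hpp' (hpred' hmem).2
      have hp' : p' ∉ H.predSyms := fun hmem => p'_notin_left hfresh hpp' (hpred' hmem).1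
      exact ⟨H, core_definiens F p x p' hx hfresh hpp' H e1 e2 hp hp'⟩

end CTIF
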